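/- arXiv:2008.01925 — 7 statements merged into one kernel-verified Lean document; each statement's English description precedes it below -/
import Mathlib

section
/- Let (S, ·) be a layered semigroup with layering map ℓ : S → ℕ and layers S_i = ℓ⁻¹({i}), let F be a locally finite collection of regressive maps on S, and suppose there exists an F-Ramsey sequence (U_i)_{i∈ℕ} of ultrafilters on S. Then for every n ∈ ℕ, every r ≥ 1, and every coloring c : S → {0,…,r−1}, there exists a sequence (x_i)_{i≥1} of elements of S_n such that for every k ≤ n the set S_k ∩ { f_1(x_{n_1}) · f_2(x_{n_2}) · ⋯ · f_ℓ(x_{n_ℓ}) : ℓ ≥ 1, 1 ≤ n_1 < n_2 < ⋯ < n_ℓ, f_1,…,f_ℓ ∈ F } is c-monochromatic (c is constant on it). -/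
/-- A regressive map on a layered semigroup `(S, ·, ℓ)`. -/
def IsRegressive {S : Type*} [Semigroup S] (ℓ : S → ℕ) (f : S → S) : Prop :=
  (∀ s t : S, f (s * t) = f s * f t) ∧
  (∀ s : S, ℓ (f s) ≤ ℓ s) ∧
  (∀ s t : S, ℓ s ≤ ℓ t → ℓ (f s) ≤ ℓ (f t)) ∧
  (∀ s t : S, |(ℓ (f s) : ℤ) - (ℓ (f t) : ℤ)| ≤ |(ℓ s : ℤ) - (ℓ t : ℤ)|)

/-- A collection of maps on `S` is locally finite if for every `i` the set of
restrictions to `ℓ⁻¹({0,…,i})` is finite. -/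
def IsLocallyFinite {S : Type*} (ℓ : S → ℕ) (F : Set (S → S)) : Prop :=
  ∀ i : ℕ, Set.Finite { g : {s : S // ℓ s ≤ i} → S | ∃ f ∈ F, g = fun s => f s.val }

/-- The product of two ultrafilters on a semigroup:
`A ∈ uMul U V ↔ {s | {t | s * t ∈ A} ∈ V} ∈ U`. -/
def uMul {S : Type*} [Semigroup S] (U V : Ultrafilter S) : Ultrafilter S :=
  U.bind fun s => V.map fun t => s * t

/-- A sequence of ultrafilters `U i` concentrated on the layers `S_i` is `F`-coherent if
it is closed under pushforwards along all maps in `F`. -/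
def FCoherent {S : Type*} [Semigroup S] (ℓ : S → ℕ) (F : Set (S → S))
    (U : ℕ → Ultrafilter S) : Prop :=
  (∀ i : ℕ, {s : S | ℓ s = i} ∈ U i) ∧
  (∀ f ∈ F, ∀ j : ℕ, ∃ k ≤ j, Ultrafilter.map f (U j) = U k)

/-- An `F`-coherent sequence is `F`-Ramsey if moreover `U j · U i = U i · U j = U j`
whenever `i ≤ j`. -/
def FRamsey {S : Type*} [Semigroup S] (ℓ : S → ℕ) (F : Set (S → S))
    (U : ℕ → Ultrafilter S) : Prop :=
  FCoherent ℓ F U ∧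
  ∀ i j : ℕ, i ≤ j → uMul (U j) (U i) = U j ∧ uMul (U i) (U j) = U j

/-- Fold of a nonempty tuple from the left: `g 0 * g 1 * ⋯ * g m`. -/
def finFold {S : Type*} (op : S → S → S) (m : ℕ) (g : Fin (m + 1) → S) : S :=
  (List.ofFn fun a : Fin m => g a.succ).foldl op (g 0)

/-- The set of all products `f₁(x_{n₁}) · ⋯ · f_ℓ(x_{n_ℓ})` with `ℓ ≥ 1`,
`n₁ < ⋯ < n_ℓ` and `f₁, …, f_ℓ ∈ F`. -/
def ComboSet {S : Type*} [Semigroup S] (F : Set (S → S)) (x : ℕ → S) : Set S :=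
  { s | ∃ (m : ℕ) (idx : Fin (m + 1) → ℕ) (fs : Fin (m + 1) → S → S),
      StrictMono idx ∧ (∀ a, fs a ∈ F) ∧
      s = finFold (· * ·) m fun a => fs a (x (idx a)) }

/- ### Auxiliary material -/

lemma mem_uMul {S : Type*} [Semigroup S] {U V : Ultrafilter S} {A : Set S} :
    A ∈ uMul U V ↔ {s : S | {t : S | s * t ∈ A} ∈ V} ∈ U := by
  change A ∈ Filter.bind (↑U) (fun s => ↑(V.map fun t => s * t)) ↔ _
  rw [Filter.mem_bind']
  simp [Ultrafilter.mem_map, Set.preimage_setOf_eq]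
  rfl

lemma finFold_succ {S : Type*} (op : S → S → S) (m : ℕ) (g : Fin (m + 2) → S) :
    finFold op (m + 1) g = op (finFold op m fun a => g a.castSucc) (g (Fin.last (m + 1))) := by
  unfold finFold
  rw [List.ofFn_succ', List.concat_eq_append, List.foldl_concat]
  simp [Fin.succ_castSucc, -Fin.castSucc_succ]

/-- One step of the recursive construction: add to `V` all `f (x)` and `y * f (x)`. -/
def nextV {S : Type*} [Semigroup S] (F : Set (S → S)) (V : Set S) (z : S) : Set S :=
  (V ∪ {s | ∃ f ∈ F, s = f z}) ∪ {s | ∃ y ∈ V, ∃ f ∈ F, s = y * f z}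

/-- The recursively constructed sequence of (sets of previous combinations, new element). -/
def VX {S : Type*} [Semigroup S] (F : Set (S → S)) (step : Set S → S) : ℕ → Set S × S
  | 0 => (∅, step ∅)
  | i + 1 =>
      (nextV F (VX F step i).1 (VX F step i).2,
       step (nextV F (VX F step i).1 (VX F step i).2))

/-- If a layered semigroup `(S, ℓ)` with a locally finite collection `F` of regressive
maps admits an `F`-Ramsey sequence of ultrafilters, then for every `n`, every finite
coloring of `S` admits a sequence `(x_i)` in `S_n` all of whose combinations lying in a
layer `S_k` with `k ≤ n` form a monochromatic set. -/
theorem ramsey_statement_infinite_fixed_layer {S : Type*} [Semigroup S] (ℓ : S → ℕ)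
    (hlay : ∀ s t : S, ℓ (s * t) = max (ℓ s) (ℓ t))
    (F : Set (S → S)) (hreg : ∀ f ∈ F, IsRegressive ℓ f)
    (hlf : IsLocallyFinite ℓ F)
    (U : ℕ → Ultrafilter S) (hU : FRamsey ℓ F U)
    (n r : ℕ) (hr : 1 ≤ r) (c : S → Fin r) :
    ∃ x : ℕ → S, (∀ i, ℓ (x i) = n) ∧
      ∀ k ≤ n, ∀ y ∈ {s : S | ℓ s = k} ∩ ComboSet F x,
        ∀ z ∈ {s : S | ℓ s = k} ∩ ComboSet F x, c y = c z := by
  classical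
  obtain ⟨⟨hlayers, hpush⟩, hprod⟩ := hU
  have hrfin : Fin r ≠ Fin 0 → True := fun _ => trivial
  -- S is nonempty
  have hSne : Nonempty S := by
    obtain ⟨s, -⟩ := Filter.nonempty_of_mem (Filter.univ_mem (f := (U 0 : Filter S)))
    exact ⟨s⟩
  -- the product identity in max form
  have umax : ∀ k j : ℕ, uMul (U k) (U j) = U (max k j) := by
    intro k j
    rcases le_total k j with h | h
    · rw [max_eq_right h]; exact (hprod k j h).2
    · rw [max_eq_left h]; exact (hprod j k h).1
  -- choose a color for each layer
  have hcolor : ∀ k : ℕ, ∃ m : Fin r, {s : S | c s = m} ∈ U k := by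
    intro k
    by_contra h
    push_neg at h
    have h1 : ∀ m : Fin r, {s : S | c s = m}ᶜ ∈ U k := fun m =>
      (Ultrafilter.compl_mem_iff_notMem).2 (h m)
    have h2 : (⋂ m : Fin r, {s : S | c s = m}ᶜ) ∈ U k := Filter.iInter_mem.2 h1
    have h3 : (⋂ m : Fin r, {s : S | c s = m}ᶜ) = ∅ := by
      ext s; simp
    rw [h3] at h2
    exact (Filter.empty_notMem _) h2
  choose colorOf hcolorOf using hcolor
  -- the basic monochromatic sets
  set A : ℕ → Set S := fun k => {s | ℓ s = k ∧ c s = colorOf k} with hAdef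
  have hAmem : ∀ k, A k ∈ U k := by
    intro k
    have := Filter.inter_mem (hlayers k) (hcolorOf k)
    exact this
  -- the star sets
  set Astar : ℕ → Set S := fun k =>
    {s | s ∈ A k ∧ ∀ j ≤ n, {t | s * t ∈ A (max k j)} ∈ U j} with hAstardef
  have hAstar_mem : ∀ k, Astar k ∈ U k := by
    intro k
    have h2 : ∀ j ∈ Set.Iic n, {s : S | {t | s * t ∈ A (max k j)} ∈ U j} ∈ U k := by
      intro j _
      have h := hAmem (max k j)
      rw [← umax k j, mem_uMul] at h
      exact h
    have h3 : (A k ∩ ⋂ j ∈ Set.Iic n, {s : S | {t | s * t ∈ A (max k j)} ∈ U j}) ∈ U k :=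
      Filter.inter_mem (hAmem k) ((Filter.biInter_mem (Set.finite_Iic n)).2 h2)
    refine Filter.mem_of_superset h3 ?_
    rintro s ⟨hs1, hs2⟩
    simp only [Set.mem_iInter, Set.mem_Iic] at hs2
    exact ⟨hs1, fun j hj => hs2 j hj⟩
  -- the star lemma
  have hstar : ∀ k, ∀ s ∈ Astar k, ∀ j ≤ n, {t | s * t ∈ Astar (max k j)} ∈ U j := by
    intro k s hs j hj
    obtain ⟨hsA, hsStar⟩ := hs
    have T0 : {t : S | s * t ∈ A (max k j)} ∈ U j := hsStar j hj
    have Tj : ∀ j' ∈ Set.Iic n,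
        {t : S | {u : S | (s * t) * u ∈ A (max (max k j) j')} ∈ U j'} ∈ U j := by
      intro j' hj'
      rw [Set.mem_Iic] at hj'
      have hp : max j j' ≤ n := max_le hj hj'
      have hB : {w : S | s * w ∈ A (max k (max j j'))} ∈ U (max j j') := hsStar _ hp
      rw [← umax j j', mem_uMul] at hB
      refine Filter.mem_of_superset hB ?_
      intro t ht
      refine Filter.mem_of_superset ht ?_
      intro u hu
      simp only [Set.mem_setOf_eq] at hu ⊢
      rw [mul_assoc, max_assoc]
      exact hu
    have hint : ({t : S | s * t ∈ A (max k j)} ∩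
        ⋂ j' ∈ Set.Iic n,
          {t : S | {u : S | (s * t) * u ∈ A (max (max k j) j')} ∈ U j'}) ∈ U j :=
      Filter.inter_mem T0 ((Filter.biInter_mem (Set.finite_Iic n)).2 Tj)
    refine Filter.mem_of_superset hint ?_
    rintro t ⟨ht1, ht2⟩
    simp only [Set.mem_iInter, Set.mem_Iic] at ht2
    exact ⟨ht1, fun j' hj' => ht2 j' hj'⟩
  -- elements of Astar k live in layer k and have color colorOf k
  have hAstar_layer : ∀ k, ∀ s ∈ Astar k, ℓ s = k := fun k s hs => hs.1.1
  -- representatives for restrictions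
  have hrep : ∀ g : {s : S // ℓ s ≤ n} → S,
      ∃ f : S → S, g ∈ {g : {s : S // ℓ s ≤ n} → S | ∃ f ∈ F, g = fun s => f s.val} →
        f ∈ F ∧ g = fun s => f s.val := by
    intro g
    by_cases hg : g ∈ {g : {s : S // ℓ s ≤ n} → S | ∃ f ∈ F, g = fun s => f s.val}
    · obtain ⟨f, hf, hgf⟩ := hg
      exact ⟨f, fun _ => ⟨hf, hgf⟩⟩
    · exact ⟨id, fun h => absurd h hg⟩
  choose rep hrepP using hrep
  -- the pushforward layers
  have hkf : ∀ f : S → S, ∃ k : ℕ, f ∈ F → k ≤ n ∧ Ultrafilter.map f (U n) = U k := by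
    intro f
    by_cases hf : f ∈ F
    · obtain ⟨k, hk, he⟩ := hpush f hf n
      exact ⟨k, fun _ => ⟨hk, he⟩⟩
    · exact ⟨0, fun h => absurd h hf⟩
  choose kf hkfP using hkf
  -- the step lemma
  have hstep : ∀ V : Set S, V.Finite → (∀ y ∈ V, ℓ y ≤ n ∧ y ∈ Astar (ℓ y)) →
      {z : S | ℓ z = n ∧ ∀ f ∈ F,
        f z ∈ Astar (ℓ (f z)) ∧ ∀ y ∈ V, y * f z ∈ Astar (ℓ (y * f z))} ∈ U n := by
    intro V hVfin hVinv
    have hCg : ∀ g ∈ {g : {s : S // ℓ s ≤ n} → S | ∃ f ∈ F, g = fun s => f s.val},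
        {z : S | rep g z ∈ Astar (kf (rep g)) ∧
          ∀ y ∈ V, y * rep g z ∈ Astar (max (ℓ y) (kf (rep g)))} ∈ U n := by
      intro g hg
      obtain ⟨hfF, -⟩ := hrepP g hg
      obtain ⟨hkle, hkeq⟩ := hkfP (rep g) hfF
      have h1 : Astar (kf (rep g)) ∈ U (kf (rep g)) := hAstar_mem _
      have h2 : ∀ y ∈ V, {t : S | y * t ∈ Astar (max (ℓ y) (kf (rep g)))} ∈ U (kf (rep g)) :=
        fun y hy => hstar (ℓ y) y (hVinv y hy).2 (kf (rep g)) hkle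
      have h3 : (Astar (kf (rep g)) ∩
          ⋂ y ∈ V, {t : S | y * t ∈ Astar (max (ℓ y) (kf (rep g)))}) ∈ U (kf (rep g)) :=
        Filter.inter_mem h1 ((Filter.biInter_mem hVfin).2 h2)
      rw [← hkeq, Ultrafilter.mem_map] at h3
      refine Filter.mem_of_superset h3 ?_
      intro z hz
      simp only [Set.mem_preimage, Set.mem_inter_iff, Set.mem_iInter] at hz
      exact ⟨hz.1, fun y hy => hz.2 y hy⟩
    have hbig : ({z : S | ℓ z = n} ∩
        ⋂ g ∈ {g : {s : S // ℓ s ≤ n} → S | ∃ f ∈ F, g = fun s => f s.val},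
          {z : S | rep g z ∈ Astar (kf (rep g)) ∧
            ∀ y ∈ V, y * rep g z ∈ Astar (max (ℓ y) (kf (rep g)))}) ∈ U n :=
      Filter.inter_mem (hlayers n) ((Filter.biInter_mem (hlf n)).2 hCg)
    refine Filter.mem_of_superset hbig ?_
    rintro z ⟨hzl, hzG⟩
    simp only [Set.mem_iInter] at hzG
    refine ⟨hzl, ?_⟩
    intro f hf
    have hzle : ℓ z ≤ n := le_of_eq hzl
    have hgG : (fun s : {s : S // ℓ s ≤ n} => f s.val) ∈
        {g : {s : S // ℓ s ≤ n} → S | ∃ f ∈ F, g = fun s => f s.val} := ⟨f, hf, rfl⟩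
    obtain ⟨hrF, hreq⟩ := hrepP _ hgG
    have hfz : f z = rep (fun s : {s : S // ℓ s ≤ n} => f s.val) z := by
      have := congrFun hreq ⟨z, hzle⟩
      simpa using this
    obtain ⟨hc1, hc2⟩ := hzG _ hgG
    rw [← hfz] at hc1 hc2
    have hlfz : ℓ (f z) = kf (rep (fun s : {s : S // ℓ s ≤ n} => f s.val)) :=
      hAstar_layer _ _ hc1
    constructor
    · rw [hlfz]; exact hc1
    · intro y hy
      have h := hc2 y hy
      have hly : ℓ (y * f z) = max (ℓ y) (kf (rep (fun s : {s : S // ℓ s ≤ n} => f s.val))) := by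
        rw [hlay, hlfz]
      rw [hly]; exact h
  -- the choice function
  have hchoice : ∀ V : Set S, ∃ z : S,
      (V.Finite ∧ ∀ y ∈ V, ℓ y ≤ n ∧ y ∈ Astar (ℓ y)) →
      ℓ z = n ∧ ∀ f ∈ F, f z ∈ Astar (ℓ (f z)) ∧ ∀ y ∈ V, y * f z ∈ Astar (ℓ (y * f z)) := by
    intro V
    by_cases h : V.Finite ∧ ∀ y ∈ V, ℓ y ≤ n ∧ y ∈ Astar (ℓ y)
    · obtain ⟨z, hz⟩ := Filter.nonempty_of_mem (hstep V h.1 h.2)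
      exact ⟨z, fun _ => hz⟩
    · exact ⟨Classical.choice hSne, fun hh => absurd hh h⟩
  choose step hstepP using hchoice
  -- the sequence
  set V : ℕ → Set S := fun i => (VX F step i).1 with hVdef
  set x : ℕ → S := fun i => (VX F step i).2 with hxdef
  have hV0 : V 0 = ∅ := rfl
  have hVsucc : ∀ i, V (i + 1) = nextV F (V i) (x i) := fun i => rfl
  have hxsucc : ∀ i, x (i + 1) = step (V (i + 1)) := fun i => rfl
  have hx0 : x 0 = step (V 0) := by
    show (VX F step 0).2 = step (VX F step 0).1
    rfl
  -- finiteness of sets of values of F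
  have hFx_fin : ∀ z : S, ℓ z = n → Set.Finite {s : S | ∃ f ∈ F, s = f z} := by
    intro z hz
    have hzle : ℓ z ≤ n := le_of_eq hz
    have hsub : {s : S | ∃ f ∈ F, s = f z} ⊆
        (fun g : {s : S // ℓ s ≤ n} → S => g ⟨z, hzle⟩) ''
          {g : {s : S // ℓ s ≤ n} → S | ∃ f ∈ F, g = fun s => f s.val} := by
      rintro s ⟨f, hf, rfl⟩
      exact ⟨fun s => f s.val, ⟨f, hf, rfl⟩, rfl⟩
    exact Set.Finite.subset ((hlf n).image _) hsub
  -- main invariant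
  have hmain : ∀ i, (V i).Finite ∧ (∀ y ∈ V i, ℓ y ≤ n ∧ y ∈ Astar (ℓ y)) ∧
      (ℓ (x i) = n ∧ ∀ f ∈ F,
        f (x i) ∈ Astar (ℓ (f (x i))) ∧ ∀ y ∈ V i, y * f (x i) ∈ Astar (ℓ (y * f (x i)))) := by
    intro i
    induction i with
    | zero =>
      have hfin : (V 0).Finite := by rw [hV0]; exact Set.finite_empty
      have hinv : ∀ y ∈ V 0, ℓ y ≤ n ∧ y ∈ Astar (ℓ y) := by
        intro y hy; rw [hV0] at hy; exact absurd hy (Set.notMem_empty y)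
      refine ⟨hfin, hinv, ?_⟩
      rw [hx0]
      exact hstepP (V 0) ⟨hfin, hinv⟩
    | succ i ih =>
      obtain ⟨hfin, hinv, hxl, hgood⟩ := ih
      have hfin' : (V (i + 1)).Finite := by
        rw [hVsucc i]
        refine ((hfin.union (hFx_fin (x i) hxl)).union ?_)
        have hsub : {s : S | ∃ y ∈ V i, ∃ f ∈ F, s = y * f (x i)} ⊆
            Set.image2 (· * ·) (V i) {s : S | ∃ f ∈ F, s = f (x i)} := by
          rintro s ⟨y, hy, f, hf, rfl⟩
          exact ⟨y, hy, f (x i), ⟨f, hf, rfl⟩, rfl⟩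
        exact Set.Finite.subset (Set.Finite.image2 _ hfin (hFx_fin (x i) hxl)) hsub
      have hinv' : ∀ y ∈ V (i + 1), ℓ y ≤ n ∧ y ∈ Astar (ℓ y) := by
        intro y hy
        rw [hVsucc i] at hy
        rcases hy with (hy | hy) | hy
        · exact hinv y hy
        · obtain ⟨f, hf, rfl⟩ := hy
          have h1 := (hgood f hf).1
          have h2 : ℓ (f (x i)) ≤ n := by
            calc ℓ (f (x i)) ≤ ℓ (x i) := (hreg f hf).2.1 (x i)
            _ = n := hxl
          exact ⟨h2, h1⟩
        · obtain ⟨y', hy', f, hf, rfl⟩ := hy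
          have h1 := (hgood f hf).2 y' hy'
          have h2 : ℓ (y' * f (x i)) ≤ n := by
            rw [hlay]
            refine max_le (hinv y' hy').1 ?_
            calc ℓ (f (x i)) ≤ ℓ (x i) := (hreg f hf).2.1 (x i)
            _ = n := hxl
          exact ⟨h2, h1⟩
      refine ⟨hfin', hinv', ?_⟩
      rw [hxsucc i]
      exact hstepP (V (i + 1)) ⟨hfin', hinv'⟩
  -- V is monotone
  have hVmono : ∀ i j, i ≤ j → V i ⊆ V j := by
    intro i j hij
    induction j with
    | zero => rw [Nat.le_zero.1 hij]
    | succ j ihj =>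
      rcases Nat.lt_or_ge i (j + 1) with h | h
      · have h1 : V i ⊆ V j := ihj (Nat.lt_succ_iff.1 h)
        refine h1.trans ?_
        rw [hVsucc j]
        intro s hs
        exact Or.inl (Or.inl hs)
      · rw [Nat.le_antisymm hij h]
  -- every combination lies in some V
  have hcombo : ∀ (m : ℕ) (idx : Fin (m + 1) → ℕ) (fs : Fin (m + 1) → S → S),
      StrictMono idx → (∀ a, fs a ∈ F) →
      (finFold (· * ·) m fun a => fs a (x (idx a))) ∈ V (idx (Fin.last m) + 1) := by
    intro m
    induction m with
    | zero =>
      intro idx fs _ hfs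
      have h0 : (finFold (· * ·) 0 fun a => fs a (x (idx a))) = fs 0 (x (idx 0)) := rfl
      have hl0 : Fin.last 0 = (0 : Fin 1) := rfl
      rw [h0, hl0, hVsucc (idx 0)]
      exact Or.inl (Or.inr ⟨fs 0, hfs 0, rfl⟩)
    | succ m ih =>
      intro idx fs hidx hfs
      rw [finFold_succ]
      have hy := ih (fun a => idx a.castSucc) (fun a => fs a.castSucc)
        (hidx.comp Fin.strictMono_castSucc) (fun a => hfs _)
      have hyV : (finFold (· * ·) m fun a => fs a.castSucc (x (idx a.castSucc))) ∈
          V (idx (Fin.last (m + 1))) := by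
        refine hVmono _ _ ?_ hy
        have hlt : idx ((Fin.last m).castSucc) < idx (Fin.last (m + 1)) :=
          hidx (Fin.castSucc_lt_last _)
        show idx ((Fin.last m).castSucc) + 1 ≤ idx (Fin.last (m + 1))
        omega
      rw [hVsucc (idx (Fin.last (m + 1)))]
      exact Or.inr ⟨_, hyV, fs (Fin.last (m + 1)), hfs _, rfl⟩
  -- conclusion
  refine ⟨x, fun i => (hmain i).2.2.1, ?_⟩
  intro k hk y hy z hz
  have key : ∀ w, ℓ w = k → w ∈ ComboSet F x → c w = colorOf k := by
    intro w hw hmem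
    obtain ⟨m, idx, fs, hidx, hfs, rfl⟩ := hmem
    have h1 := hcombo m idx fs hidx hfs
    have h2 := ((hmain (idx (Fin.last m) + 1)).2.1 _ h1).2
    have h3 := h2.1.2
    rw [hw] at h3
    exact h3
  obtain ⟨hy1, hy2⟩ := hy
  obtain ⟨hz1, hz2⟩ := hz
  rw [key y hy1 hy2, key z hz1 hz2]
end

section
/- Let (S, ·) be a layered semigroup with layering map ℓ : S → ℕ and layers S_i = ℓ⁻¹({i}), let F be a locally finite collection of regressive maps on S, and suppose there exists an F-Ramsey sequence (U_i)_{i∈ℕ} of ultrafilters on S. Then for every n ∈ ℕ, every r ≥ 1, and every coloring c : S → {0,…,r−1}, there exists x ∈ S_n such that for every k ≤ n the set S_k ∩ { f(x) : f ∈ F } is c-monochromatic (c is constant on it). -/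
/-- If a layered semigroup `(S, ℓ)` with a locally finite collection `F` of regressive
maps admits an `F`-Ramsey sequence of ultrafilters, then for every `n`, every finite
coloring of `S` admits an `x ∈ S_n` such that for every `k ≤ n` the set
`S_k ∩ {f(x) : f ∈ F}` is monochromatic. -/
theorem ramsey_statement_single {S : Type*} [Semigroup S] (ℓ : S → ℕ)
    (hlay : ∀ s t : S, ℓ (s * t) = max (ℓ s) (ℓ t))
    (F : Set (S → S)) (hreg : ∀ f ∈ F, IsRegressive ℓ f)
    (hlf : IsLocallyFinite ℓ F)
    (U : ℕ → Ultrafilter S) (hU : FRamsey ℓ F U)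
    (n r : ℕ) (hr : 1 ≤ r) (c : S → Fin r) :
    ∃ x : S, ℓ x = n ∧
      ∀ k ≤ n, ∀ y ∈ {s : S | ℓ s = k} ∩ {s : S | ∃ f ∈ F, s = f x},
        ∀ z ∈ {s : S | ℓ s = k} ∩ {s : S | ∃ f ∈ F, s = f x}, c y = c z := by
  classical
  obtain ⟨⟨hS, hpush⟩, -⟩ := hU
  -- each ultrafilter U k determines a color
  have hcol : ∀ k : ℕ, ∃ v : Fin r, {s : S | c s = v} ∈ U k := by
    intro k
    obtain ⟨v, -, hv⟩ := Ultrafilter.eq_pure_of_finite_mem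
      (f := Ultrafilter.map c (U k)) (Set.finite_univ (α := Fin r)) Filter.univ_mem
    have : ({v} : Set (Fin r)) ∈ Ultrafilter.map c (U k) := by
      rw [hv]; exact Filter.mem_pure.2 rfl
    exact ⟨v, by simpa [Ultrafilter.mem_map, Set.preimage, Set.mem_singleton_iff] using this⟩
  choose col hcolmem using hcol
  -- representatives of restrictions
  set G := { g : {s : S // ℓ s ≤ n} → S | ∃ f ∈ F, g = fun s => f s.val } with hGdef
  have hG : G.Finite := hlf n
  have hrep : ∀ g : {s : S // ℓ s ≤ n} → S, ∃ f : S → S,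
      g ∈ G → f ∈ F ∧ g = (fun s => f s.val) := by
    intro g
    by_cases hg : g ∈ G
    · obtain ⟨f, hf, he⟩ := hg
      exact ⟨f, fun _ => ⟨hf, he⟩⟩
    · exact ⟨id, fun h => absurd h hg⟩
  choose fg hfg using hrep
  have hfgF : ∀ g ∈ G, fg g ∈ F := fun g hg => (hfg g hg).1
  have hfgeq : ∀ g ∈ G, g = (fun s => fg g s.val) := fun g hg => (hfg g hg).2
  have hkex : ∀ g : {s : S // ℓ s ≤ n} → S, ∃ k : ℕ,
      g ∈ G → Ultrafilter.map (fg g) (U n) = U k := by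
    intro g
    by_cases hg : g ∈ G
    · obtain ⟨k, -, hk⟩ := hpush (fg g) (hfgF g hg) n
      exact ⟨k, fun _ => hk⟩
    · exact ⟨0, fun h => absurd h hg⟩
  choose kg hkgmap using hkex
  have hB : ∀ g ∈ G,
      {x : S | ℓ (fg g x) = kg g ∧ c (fg g x) = col (kg g)} ∈ U n := by
    intro g hg
    have h1 : {x : S | ℓ (fg g x) = kg g} ∈ U n := by
      have := hS (kg g)
      rw [← hkgmap g hg] at this
      simpa [Ultrafilter.mem_map] using this
    have h2 : {x : S | c (fg g x) = col (kg g)} ∈ U n := by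
      have := hcolmem (kg g)
      rw [← hkgmap g hg] at this
      simpa [Ultrafilter.mem_map] using this
    exact Filter.inter_mem h1 h2
  have hA : ({x : S | ℓ x = n} ∩
      ⋂ g ∈ G, {x : S | ℓ (fg g x) = kg g ∧ c (fg g x) = col (kg g)}) ∈ U n :=
    Filter.inter_mem (hS n) ((Filter.biInter_mem hG).2 hB)
  obtain ⟨x, hxn, hxB⟩ := Ultrafilter.nonempty_of_mem hA
  refine ⟨x, hxn, ?_⟩
  intro k hkn y hy z hz
  have key : ∀ w, ℓ w = k → (∃ f ∈ F, w = f x) → c w = col k := by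
    rintro w hwk ⟨f, hf, rfl⟩
    have hgG : (fun s : {s : S // ℓ s ≤ n} => f s.val) ∈ G := ⟨f, hf, rfl⟩
    set g : {s : S // ℓ s ≤ n} → S := fun s => f s.val with hg
    have hfx : f x = fg g x := by
      have h := congrFun (hfgeq g hgG) ⟨x, hxn.le⟩
      simpa [hg] using h
    have hx2 := Set.mem_iInter₂.1 hxB g hgG
    obtain ⟨hl, hc⟩ := hx2
    rw [hfx] at hwk ⊢
    rw [hwk] at hl
    rw [hc, hl]
  calc c y = col k := key y hy.1 hy.2
    _ = c z := (key z hz.1 hz.2).symm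
end

section
/- Let (S, ·) be a layered semigroup with layering map ℓ : S → ℕ and layers S_i = ℓ⁻¹({i}), and let F be a locally finite collection of regressive maps on S. If there exists an F-coherent sequence (U_i)_{i∈ℕ} of ultrafilters on S, then there exists an F-Ramsey sequence (V_i)_{i∈ℕ} of ultrafilters on S. -/
namespace FRamseyAux

open Ultrafilter Filter

attribute [local instance] Ultrafilter.mul Ultrafilter.semigroup

/-! ### Ultrafilter semigroup basics -/

theorem mem_umul {S : Type*} [Semigroup S] {U V : Ultrafilter S} {A : Set S} :
    A ∈ U * V ↔ {s : S | {t : S | s * t ∈ A} ∈ V} ∈ U := by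
  have h := Ultrafilter.eventually_mul U V (· ∈ A)
  simp only [Filter.eventually_iff, Ultrafilter.mem_coe] at h
  exact h

theorem uMul_eq {S : Type*} [Semigroup S] (U V : Ultrafilter S) : uMul U V = U * V := by
  apply Ultrafilter.coe_injective
  apply Filter.ext
  intro A
  rw [show ((uMul U V : Ultrafilter S) : Filter S)
      = Filter.bind ↑U (fun s => ↑(Ultrafilter.map (fun t => s * t) V)) from rfl]
  rw [Filter.mem_bind']
  simp only [Ultrafilter.mem_coe, Ultrafilter.mem_map, Set.preimage_setOf_eq]
  rw [mem_umul]
  rfl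

theorem map_mul_hom {S : Type*} [Semigroup S] {f : S → S} (hf : ∀ s t, f (s * t) = f s * f t)
    (U V : Ultrafilter S) :
    Ultrafilter.map f (U * V) = Ultrafilter.map f U * Ultrafilter.map f V := by
  apply Ultrafilter.coe_injective
  apply Filter.ext
  intro A
  simp only [Ultrafilter.mem_coe]
  rw [Ultrafilter.mem_map, mem_umul, mem_umul]
  simp only [Ultrafilter.mem_map, Set.preimage_setOf_eq, Set.mem_preimage, Set.mem_setOf_eq, hf]

theorem continuous_umap {S : Type*} (f : S → S) :
    Continuous (Ultrafilter.map f : Ultrafilter S → Ultrafilter S) :=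
  ultrafilterBasis_is_basis.continuous_iff.2 <| by
    rintro _ ⟨s, rfl⟩
    have h : (Ultrafilter.map f : Ultrafilter S → Ultrafilter S) ⁻¹' {u | s ∈ u}
        = {u : Ultrafilter S | f ⁻¹' s ∈ u} := by
      ext u; exact Ultrafilter.mem_map
    rw [h]
    exact ultrafilter_isOpen_basic _

theorem layer_mem_mul {S : Type*} [Semigroup S] {ℓ : S → ℕ}
    (hlay : ∀ s t : S, ℓ (s * t) = max (ℓ s) (ℓ t)) {i j : ℕ} {U V : Ultrafilter S}
    (hU : {s : S | ℓ s = i} ∈ U) (hV : {s : S | ℓ s = j} ∈ V) :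
    {s : S | ℓ s = max i j} ∈ U * V := by
  have h := Ultrafilter.eventually_mul U V (fun m => ℓ m = max i j)
  rw [Filter.eventually_iff, Ultrafilter.mem_coe] at h
  rw [show {s : S | ℓ s = max i j} = {m | ℓ m = max i j} from rfl, h]
  filter_upwards [hU] with s hs
  filter_upwards [hV] with t ht
  rw [hlay, hs, ht]

theorem ellis_pi {S : Type*} [Semigroup S] (X : Set (ℕ → Ultrafilter S)) (hne : X.Nonempty)
    (hcl : IsClosed X) (hmul : ∀ x ∈ X, ∀ y ∈ X, x * y ∈ X) : ∃ E ∈ X, E * E = E := by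
  have hcont : ∀ R : ℕ → Ultrafilter S, Continuous (· * R) := fun R =>
    continuous_pi fun j => (Ultrafilter.continuous_mul_left (R j)).comp (continuous_apply j)
  obtain ⟨E, h1, h2⟩ := exists_idempotent_in_compact_subsemigroup hcont X hne hcl.isCompact hmul
  exact ⟨E, h1, h2⟩

/-! ### Words -/

section Words
variable {M : Type*} [Semigroup M]

def pwAux (E : ℕ → M) (b : ℕ) : ℕ → M
  | 0 => E b
  | k + 1 => pwAux E b k * E (b + k + 1)

/-- increasing word `E b * E (b+1) * ⋯ * E m` (junk for `m < b`) -/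
def pw (E : ℕ → M) (b m : ℕ) : M := pwAux E b (m - b)

def swAux (E : ℕ → M) (b : ℕ) : ℕ → M
  | 0 => E b
  | k + 1 => E (b + k + 1) * swAux E b k

/-- decreasing word `E m * E (m-1) * ⋯ * E b` (junk for `m < b`) -/
def sw (E : ℕ → M) (b m : ℕ) : M := swAux E b (m - b)

variable {E : ℕ → M} {b m j t k : ℕ}

theorem pw_self : pw E b b = E b := by simp [pw, pwAux]

theorem sw_self : sw E b b = E b := by simp [sw, swAux]

theorem pw_succ (h : b ≤ m) : pw E b (m + 1) = pw E b m * E (m + 1) := by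
  unfold pw
  have h1 : m + 1 - b = (m - b) + 1 := by omega
  rw [h1]
  show pwAux E b (m - b) * E (b + (m - b) + 1) = _
  have h2 : b + (m - b) + 1 = m + 1 := by omega
  rw [h2]

theorem sw_succ (h : b ≤ m) : sw E b (m + 1) = E (m + 1) * sw E b m := by
  unfold sw
  have h1 : m + 1 - b = (m - b) + 1 := by omega
  rw [h1]
  show E (b + (m - b) + 1) * swAux E b (m - b) = _
  have h2 : b + (m - b) + 1 = m + 1 := by omega
  rw [h2]

theorem pw_absorb (idem : ∀ n, E n * E n = E n) (h : b ≤ m) : pw E b m * E m = pw E b m := by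
  rcases h.lt_or_eq with h' | h'
  · obtain ⟨m', rfl⟩ : ∃ m', m = m' + 1 := ⟨m - 1, by omega⟩
    rw [pw_succ (by omega), mul_assoc, idem]
  · subst h'; rw [pw_self, idem]

theorem sw_absorb (idem : ∀ n, E n * E n = E n) (h : b ≤ m) : E m * sw E b m = sw E b m := by
  rcases h.lt_or_eq with h' | h'
  · obtain ⟨m', rfl⟩ : ∃ m', m = m' + 1 := ⟨m - 1, by omega⟩
    rw [sw_succ (by omega), ← mul_assoc, idem]
  · subst h'; rw [sw_self, idem]

theorem pw_map {Φ : M → M} (hΦ : ∀ x y, Φ (x * y) = Φ x * Φ y) {φ : ℕ → ℕ}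
    (hE : ∀ n, Φ (E n) = E (φ n)) (hmono : Monotone φ) (hstep : ∀ n, φ (n + 1) ≤ φ n + 1)
    (idem : ∀ n, E n * E n = E n) (h : b ≤ m) : Φ (pw E b m) = pw E (φ b) (φ m) := by
  induction m, h using Nat.le_induction with
  | base => rw [pw_self, hE, pw_self]
  | succ m hbm ih =>
    rw [pw_succ hbm, hΦ, ih, hE]
    have h1 : φ m ≤ φ (m + 1) := hmono (by omega)
    have h2 : φ (m + 1) ≤ φ m + 1 := hstep m
    rcases (by omega : φ (m + 1) = φ m ∨ φ (m + 1) = φ m + 1) with h3 | h3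
    · rw [h3, pw_absorb idem (hmono hbm)]
    · rw [h3, pw_succ (hmono hbm)]

theorem sw_map {Φ : M → M} (hΦ : ∀ x y, Φ (x * y) = Φ x * Φ y) {φ : ℕ → ℕ}
    (hE : ∀ n, Φ (E n) = E (φ n)) (hmono : Monotone φ) (hstep : ∀ n, φ (n + 1) ≤ φ n + 1)
    (idem : ∀ n, E n * E n = E n) (h : b ≤ m) : Φ (sw E b m) = sw E (φ b) (φ m) := by
  induction m, h using Nat.le_induction with
  | base => rw [sw_self, hE, sw_self]
  | succ m hbm ih =>
    rw [sw_succ hbm, hΦ, ih, hE]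
    have h1 : φ m ≤ φ (m + 1) := hmono (by omega)
    have h2 : φ (m + 1) ≤ φ m + 1 := hstep m
    rcases (by omega : φ (m + 1) = φ m ∨ φ (m + 1) = φ m + 1) with h3 | h3
    · rw [h3, sw_absorb idem (hmono hbm)]
    · rw [h3, sw_succ (hmono hbm)]

theorem pw_cons (h : b < m) : pw E b m = E b * pw E (b + 1) m := by
  induction m, h using Nat.le_induction with
  | base => rw [pw_succ (le_refl b), pw_self, pw_self]
  | succ m hbm ih =>
    rw [pw_succ (by omega), ih, pw_succ (by omega), mul_assoc]

theorem sw_cons (h : b < m) : sw E b m = sw E (b + 1) m * E b := by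
  induction m, h using Nat.le_induction with
  | base => rw [sw_succ (le_refl b), sw_self, sw_self]
  | succ m hbm ih =>
    rw [sw_succ (by omega), ih, sw_succ (by omega), mul_assoc]

theorem pw_low (habsL : ∀ a c, a ≤ c → c ≤ j → E a * E c = E c) (ht : t ≤ k) (hk : k ≤ j) :
    pw E t k = E k := by
  induction k, ht using Nat.le_induction with
  | base => exact pw_self
  | succ k htk ih =>
    rw [pw_succ htk, ih (by omega), habsL k (k + 1) (by omega) (by omega)]

theorem sw_low (habsR : ∀ a c, a ≤ c → c ≤ j → E c * E a = E c) (ht : t ≤ k) (hk : k ≤ j) :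
    sw E t k = E k := by
  induction k, ht using Nat.le_induction with
  | base => exact sw_self
  | succ k htk ih =>
    rw [sw_succ htk, ih (by omega), habsR k (k + 1) (by omega) (by omega)]

theorem pw_shift_one (habsL : ∀ a c, a ≤ c → c ≤ j → E a * E c = E c)
    (h1 : t < j) (h2 : j ≤ k) : pw E t k = pw E (t + 1) k := by
  have htk : t < k := lt_of_lt_of_le h1 h2
  rw [pw_cons htk]
  rcases (by omega : t + 1 < k ∨ t + 1 = k) with h3 | h3
  · rw [pw_cons h3, ← mul_assoc, habsL t (t + 1) (by omega) (by omega), ← pw_cons h3]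
  · subst h3
    rw [pw_self, habsL t (t + 1) (by omega) (by omega)]

theorem sw_shift_one (habsR : ∀ a c, a ≤ c → c ≤ j → E c * E a = E c)
    (h1 : t < j) (h2 : j ≤ k) : sw E t k = sw E (t + 1) k := by
  have htk : t < k := lt_of_lt_of_le h1 h2
  rw [sw_cons htk]
  rcases (by omega : t + 1 < k ∨ t + 1 = k) with h3 | h3
  · rw [sw_cons h3, mul_assoc, habsR t (t + 1) (by omega) (by omega), ← sw_cons h3]
  · subst h3
    rw [sw_self, habsR t (t + 1) (by omega) (by omega)]

theorem pw_shift (habsL : ∀ a c, a ≤ c → c ≤ j → E a * E c = E c)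
    (h2 : j ≤ k) : ∀ t, t ≤ j → pw E t k = pw E j k := by
  intro t ht
  obtain ⟨n, hn⟩ : ∃ n, j - t = n := ⟨j - t, rfl⟩
  induction n generalizing t with
  | zero =>
    have : t = j := by omega
    subst this; rfl
  | succ n ih =>
    have h1 : t < j := by omega
    rw [pw_shift_one habsL h1 h2]
    exact ih (t + 1) (by omega) (by omega)

theorem sw_shift (habsR : ∀ a c, a ≤ c → c ≤ j → E c * E a = E c)
    (h2 : j ≤ k) : ∀ t, t ≤ j → sw E t k = sw E j k := by
  intro t ht
  obtain ⟨n, hn⟩ : ∃ n, j - t = n := ⟨j - t, rfl⟩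
  induction n generalizing t with
  | zero =>
    have : t = j := by omega
    subst this; rfl
  | succ n ih =>
    have h1 : t < j := by omega
    rw [sw_shift_one habsR h1 h2]
    exact ih (t + 1) (by omega) (by omega)

theorem pw_prop {L : ℕ → M → Prop} (hL : ∀ i i' x y, L i x → L i' y → L (max i i') (x * y))
    (hE : ∀ n, L n (E n)) (h : b ≤ m) : L m (pw E b m) := by
  induction m, h using Nat.le_induction with
  | base => rw [pw_self]; exact hE b
  | succ m hbm ih =>
    rw [pw_succ hbm]
    have := hL m (m + 1) _ _ ih (hE (m + 1))
    rwa [max_eq_right (by omega)] at this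

theorem sw_prop {L : ℕ → M → Prop} (hL : ∀ i i' x y, L i x → L i' y → L (max i i') (x * y))
    (hE : ∀ n, L n (E n)) (h : b ≤ m) : L m (sw E b m) := by
  induction m, h using Nat.le_induction with
  | base => rw [sw_self]; exact hE b
  | succ m hbm ih =>
    rw [sw_succ hbm]
    have := hL (m + 1) m _ _ (hE (m + 1)) ih
    rwa [max_eq_left (by omega)] at this

end Words

/-! ### The layer index function -/

section Phi
variable {S : Type*} [Semigroup S] {ℓ : S → ℕ}

noncomputable def phiFn (ℓ : S → ℕ) (hne : ∀ i : ℕ, ∃ s : S, ℓ s = i) (f : S → S) (m : ℕ) : ℕ :=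
  ℓ (f (hne m).choose)

variable {hne : ∀ i : ℕ, ∃ s : S, ℓ s = i} {f : S → S}

theorem phi_spec (hf : IsRegressive ℓ f) {s : S} {m : ℕ} (hs : ℓ s = m) :
    ℓ (f s) = phiFn ℓ hne f m := by
  have h1 : ℓ ((hne m).choose) = m := (hne m).choose_spec
  exact le_antisymm (hf.2.2.1 _ _ (by omega)) (hf.2.2.1 _ _ (by omega))

theorem phi_le (hf : IsRegressive ℓ f) (m : ℕ) : phiFn ℓ hne f m ≤ m := by
  unfold phiFn
  have h1 : ℓ ((hne m).choose) = m := (hne m).choose_spec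
  have := hf.2.1 (hne m).choose
  omega

theorem phi_mono (hf : IsRegressive ℓ f) : Monotone (phiFn ℓ hne f) := by
  intro a b hab
  have h1 : ℓ ((hne a).choose) = a := (hne a).choose_spec
  have h2 : ℓ ((hne b).choose) = b := (hne b).choose_spec
  exact hf.2.2.1 _ _ (by omega)

theorem phi_step (hf : IsRegressive ℓ f) (m : ℕ) :
    phiFn ℓ hne f (m + 1) ≤ phiFn ℓ hne f m + 1 := by
  have h1 : ℓ ((hne m).choose) = m := (hne m).choose_spec
  have h2 : ℓ ((hne (m + 1)).choose) = m + 1 := (hne (m + 1)).choose_spec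
  have h3 := hf.2.2.2 (hne (m + 1)).choose (hne m).choose
  unfold phiFn
  rw [h1, h2] at h3
  rw [show ((m + 1 : ℕ) : ℤ) = (m : ℤ) + 1 from by push_cast; ring] at h3
  rw [show ((m : ℤ) + 1) - m = 1 from by ring] at h3
  rw [show |(1 : ℤ)| = 1 from by norm_num] at h3
  have h5 := abs_le.mp h3
  omega

theorem map_layer (hf : IsRegressive ℓ f) {W : Ultrafilter S} {m : ℕ}
    (hW : {s : S | ℓ s = m} ∈ W) :
    {s : S | ℓ s = phiFn ℓ hne f m} ∈ Ultrafilter.map f W := by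
  rw [Ultrafilter.mem_map]
  exact Filter.mem_of_superset hW (fun s hs => phi_spec hf hs)

omit [Semigroup S] in
theorem layer_eq_of_mem {W : Ultrafilter S} {a b : ℕ}
    (ha : {s : S | ℓ s = a} ∈ W) (hb : {s : S | ℓ s = b} ∈ W) : a = b := by
  obtain ⟨s, hs1, hs2⟩ := Ultrafilter.nonempty_of_mem (Filter.inter_mem ha hb)
  simp only [Set.mem_setOf_eq] at hs1 hs2
  omega

end Phi

end FRamseyAux

namespace FRamseyAux

open Ultrafilter Filter

attribute [local instance] Ultrafilter.mul Ultrafilter.semigroup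

section Main

variable {S : Type*} [Semigroup S] (ℓ : S → ℕ) (F : Set (S → S))
  (hne : ∀ i : ℕ, ∃ s : S, ℓ s = i)

/-- The space of exactly-coherent sequences. -/
def CohSeq : Set (ℕ → Ultrafilter S) :=
  {W | (∀ n, {s : S | ℓ s = n} ∈ W n) ∧
    ∀ f ∈ F, ∀ n, Ultrafilter.map f (W n) = W (phiFn ℓ hne f n)}

variable {ℓ F hne}

theorem cohseq_layer {W : ℕ → Ultrafilter S} (hW : W ∈ CohSeq ℓ F hne) (n : ℕ) :
    {s : S | ℓ s = n} ∈ W n := hW.1 n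

theorem cohseq_mul (hlay : ∀ s t : S, ℓ (s * t) = max (ℓ s) (ℓ t))
    (hreg : ∀ f ∈ F, IsRegressive ℓ f) :
    ∀ x ∈ CohSeq ℓ F hne, ∀ y ∈ CohSeq ℓ F hne, x * y ∈ CohSeq ℓ F hne := by
  intro x hx y hy
  constructor
  · intro n
    have h := layer_mem_mul hlay (hx.1 n) (hy.1 n)
    rwa [max_self] at h
  · intro f hf n
    show Ultrafilter.map f (x n * y n) = x (phiFn ℓ hne f n) * y (phiFn ℓ hne f n)
    rw [map_mul_hom (hreg f hf).1, hx.2 f hf n, hy.2 f hf n]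

theorem cohseq_closed : IsClosed (CohSeq ℓ F hne) := by
  have e : CohSeq ℓ F hne = ({W : ℕ → Ultrafilter S | ∀ n, {s : S | ℓ s = n} ∈ W n} ∩
      ⋂ (f : S → S) (_ : f ∈ F) (n : ℕ),
        {W : ℕ → Ultrafilter S | Ultrafilter.map f (W n) = W (phiFn ℓ hne f n)}) := by
    ext W
    simp only [Set.mem_inter_iff, Set.mem_iInter, Set.mem_setOf_eq]
    rfl
  rw [e]
  apply IsClosed.inter
  · have e2 : {W : ℕ → Ultrafilter S | ∀ n, {s : S | ℓ s = n} ∈ W n}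
        = ⋂ n : ℕ, (fun W : ℕ → Ultrafilter S => W n) ⁻¹' {u : Ultrafilter S | {s : S | ℓ s = n} ∈ u} := by
      ext W; simp
    rw [e2]
    exact isClosed_iInter fun n => (ultrafilter_isClosed_basic _).preimage (continuous_apply n)
  · refine isClosed_iInter fun f => isClosed_iInter fun _ => isClosed_iInter fun n => ?_
    exact isClosed_eq ((continuous_umap f).comp (continuous_apply n)) (continuous_apply _)

/-- The invariant carried through the recursion. -/
def InvP (j : ℕ) (V : ℕ → Ultrafilter S) : Prop :=
  V ∈ CohSeq ℓ F hne ∧ ∀ a b : ℕ, a ≤ b → b ≤ j → V a * V b = V b ∧ V b * V a = V b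

theorem step_exists (hlay : ∀ s t : S, ℓ (s * t) = max (ℓ s) (ℓ t))
    (hreg : ∀ f ∈ F, IsRegressive ℓ f) (j : ℕ) (V : ℕ → Ultrafilter S)
    (hV : InvP (ℓ := ℓ) (F := F) (hne := hne) j V) :
    ∃ V', InvP (ℓ := ℓ) (F := F) (hne := hne) (j + 1) V' ∧ ∀ i ≤ j, V' i = V i := by
  obtain ⟨hVX, habs⟩ := hV
  have hVlay := hVX.1
  have hVcoh := hVX.2
  -- the compact subsemigroup of coherent sequences with prescribed coordinates `≤ j`
  set X' : Set (ℕ → Ultrafilter S) := {W | W ∈ CohSeq ℓ F hne ∧ ∀ i ≤ j, W i = V i}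
    with hX'def
  have hX'ne : X'.Nonempty := ⟨V, hVX, fun i _ => rfl⟩
  have hX'closed : IsClosed X' := by
    have e : X' = CohSeq ℓ F hne ∩
        ⋂ (i : ℕ) (_ : i ≤ j), {W : ℕ → Ultrafilter S | W i = V i} := by
      ext W
      simp only [hX'def, Set.mem_inter_iff, Set.mem_iInter, Set.mem_setOf_eq]
    rw [e]
    exact cohseq_closed.inter (isClosed_iInter fun i => isClosed_iInter fun _ =>
      isClosed_eq (continuous_apply i) continuous_const)
  have hX'mul : ∀ x ∈ X', ∀ y ∈ X', x * y ∈ X' := by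
    rintro x ⟨hxX, hx⟩ y ⟨hyX, hy⟩
    refine ⟨cohseq_mul hlay hreg x hxX y hyX, fun i hi => ?_⟩
    show x i * y i = V i
    rw [hx i hi, hy i hi, (habs i i le_rfl hi).1]
  -- first Ellis idempotent
  obtain ⟨Eb, hEbX', hEbid⟩ := ellis_pi X' hX'ne hX'closed hX'mul
  obtain ⟨hEbX, hEbcoord⟩ := hEbX'
  have hEbidem : ∀ n, Eb n * Eb n = Eb n := fun n => congrFun hEbid n
  have habsEbR : ∀ a c, a ≤ c → c ≤ j → Eb c * Eb a = Eb c := by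
    intro a c hac hc
    rw [hEbcoord a (le_trans hac hc), hEbcoord c hc]
    exact (habs a c hac hc).2
  -- the decreasing-word witness showing `Z` below is nonempty
  set W2 : ℕ → Ultrafilter S := fun m => if m ≤ j then V m else sw Eb j m with hW2def
  have hW2lo : ∀ i, i ≤ j → W2 i = V i := by
    intro i hi; simp only [hW2def, if_pos hi]
  have hW2hi : ∀ m, j < m → W2 m = sw Eb j m := by
    intro m hm; simp only [hW2def, if_neg (by omega : ¬ m ≤ j)]
  have hW2X : W2 ∈ CohSeq ℓ F hne := by
    constructor
    · intro n
      by_cases hn : n ≤ j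
      · rw [hW2lo n hn]; exact hVlay n
      · rw [hW2hi n (by omega)]
        exact sw_prop (L := fun i x => {s : S | ℓ s = i} ∈ x)
          (fun i i' x y hx hy => layer_mem_mul hlay hx hy)
          (fun k => hEbX.1 k) (by omega)
    · intro f hf n
      by_cases hn : n ≤ j
      · rw [hW2lo n hn, hW2lo _ (le_trans (phi_le (hreg f hf) n) hn)]
        exact hVcoh f hf n
      · have hjn : j ≤ n := by omega
        rw [hW2hi n (by omega)]
        rw [sw_map (map_mul_hom (hreg f hf).1) (fun k => hEbX.2 f hf k)
          (phi_mono (hreg f hf)) (phi_step (hreg f hf)) hEbidem hjn]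
        by_cases hfn : phiFn ℓ hne f n ≤ j
        · rw [sw_low habsEbR (phi_mono (hreg f hf) hjn) hfn, hW2lo _ hfn,
            hEbcoord _ hfn]
        · rw [sw_shift habsEbR (by omega) (phiFn ℓ hne f j) (phi_le (hreg f hf) j),
            hW2hi _ (by omega)]
  have hW2j1 : W2 (j + 1) = Eb (j + 1) * V j := by
    rw [hW2hi (j + 1) (by omega), sw_succ le_rfl, sw_self, hEbcoord j le_rfl]
  have hW2Z : W2 (j + 1) * V j = W2 (j + 1) := by
    rw [hW2j1, mul_assoc, (habs j j le_rfl le_rfl).1]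
  -- second Ellis idempotent, absorbing `V j` on the right at coordinate `j+1`
  set Z : Set (ℕ → Ultrafilter S) := {W | W ∈ X' ∧ W (j + 1) * V j = W (j + 1)} with hZdef
  have hZne : Z.Nonempty := ⟨W2, ⟨hW2X, hW2lo⟩, hW2Z⟩
  have hZclosed : IsClosed Z := by
    have e : Z = X' ∩ {W : ℕ → Ultrafilter S | W (j + 1) * V j = W (j + 1)} := rfl
    rw [e]
    exact hX'closed.inter (isClosed_eq
      ((Ultrafilter.continuous_mul_left (V j)).comp (continuous_apply (j + 1)))
      (continuous_apply (j + 1)))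
  have hZmul : ∀ x ∈ Z, ∀ y ∈ Z, x * y ∈ Z := by
    rintro x ⟨hx1, hx2⟩ y ⟨hy1, hy2⟩
    refine ⟨hX'mul x hx1 y hy1, ?_⟩
    show (x (j + 1) * y (j + 1)) * V j = x (j + 1) * y (j + 1)
    rw [mul_assoc, hy2]
  obtain ⟨Eh, hEhZ, hEhid⟩ := ellis_pi Z hZne hZclosed hZmul
  obtain ⟨⟨hEhX, hEhcoord⟩, hEhz⟩ := hEhZ
  have hEhidem : ∀ n, Eh n * Eh n = Eh n := fun n => congrFun hEhid n
  have habsEhL : ∀ a c, a ≤ c → c ≤ j → Eh a * Eh c = Eh c := by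
    intro a c hac hc
    rw [hEhcoord a (le_trans hac hc), hEhcoord c hc]
    exact (habs a c hac hc).1
  -- the new sequence: increasing words over `Eh`
  set V' : ℕ → Ultrafilter S := fun m => if m ≤ j then V m else pw Eh j m with hV'def
  have hV'lo : ∀ i, i ≤ j → V' i = V i := by
    intro i hi; simp only [hV'def, if_pos hi]
  have hV'hi : ∀ m, j < m → V' m = pw Eh j m := by
    intro m hm; simp only [hV'def, if_neg (by omega : ¬ m ≤ j)]
  have hV'X : V' ∈ CohSeq ℓ F hne := by
    constructor
    · intro n
      by_cases hn : n ≤ j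
      · rw [hV'lo n hn]; exact hVlay n
      · rw [hV'hi n (by omega)]
        exact pw_prop (L := fun i x => {s : S | ℓ s = i} ∈ x)
          (fun i i' x y hx hy => layer_mem_mul hlay hx hy)
          (fun k => hEhX.1 k) (by omega)
    · intro f hf n
      by_cases hn : n ≤ j
      · rw [hV'lo n hn, hV'lo _ (le_trans (phi_le (hreg f hf) n) hn)]
        exact hVcoh f hf n
      · have hjn : j ≤ n := by omega
        rw [hV'hi n (by omega)]
        rw [pw_map (map_mul_hom (hreg f hf).1) (fun k => hEhX.2 f hf k)
          (phi_mono (hreg f hf)) (phi_step (hreg f hf)) hEhidem hjn]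
        by_cases hfn : phiFn ℓ hne f n ≤ j
        · rw [pw_low habsEhL (phi_mono (hreg f hf) hjn) hfn, hV'lo _ hfn,
            hEhcoord _ hfn]
        · rw [pw_shift habsEhL (by omega) (phiFn ℓ hne f j) (phi_le (hreg f hf) j),
            hV'hi _ (by omega)]
  have hV'j1 : V' (j + 1) = V j * Eh (j + 1) := by
    rw [hV'hi (j + 1) (by omega), pw_succ le_rfl, pw_self, hEhcoord j le_rfl]
  -- the new absorption facts
  have hz : Eh (j + 1) * V j = Eh (j + 1) := hEhz
  have hEhVa : ∀ a, a ≤ j → Eh (j + 1) * V a = Eh (j + 1) := by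
    intro a ha
    conv_lhs => rw [← hz]
    rw [mul_assoc, (habs a j ha le_rfl).2, hz]
  refine ⟨V', ⟨hV'X, ?_⟩, hV'lo⟩
  intro a b hab hb
  by_cases hbj : b ≤ j
  · rw [hV'lo a (le_trans hab hbj), hV'lo b hbj]
    exact habs a b hab hbj
  · have hb1 : b = j + 1 := by omega
    subst hb1
    rw [hV'j1]
    by_cases haj : a ≤ j
    · rw [hV'lo a haj]
      constructor
      · rw [← mul_assoc, (habs a j haj le_rfl).1]
      · rw [mul_assoc, hEhVa a haj]
    · have ha1 : a = j + 1 := by omega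
      subst ha1
      rw [hV'j1]
      constructor <;>
      · rw [mul_assoc, ← mul_assoc (Eh (j + 1)) (V j), hz, hEhidem]
end Main

end FRamseyAux

namespace FRamseyAux

open Ultrafilter Filter

attribute [local instance] Ultrafilter.mul Ultrafilter.semigroup

theorem fRamsey_main {S : Type*} [Semigroup S] (ℓ : S → ℕ)
    (hlay : ∀ s t : S, ℓ (s * t) = max (ℓ s) (ℓ t))
    (F : Set (S → S)) (hreg : ∀ f ∈ F, IsRegressive ℓ f)
    (U : ℕ → Ultrafilter S) (hcoh : FCoherent ℓ F U) :
    ∃ V : ℕ → Ultrafilter S, FRamsey ℓ F V := by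
  classical
  obtain ⟨hUlayer, hUcoh⟩ := hcoh
  have hne : ∀ i : ℕ, ∃ s : S, ℓ s = i := fun i => Ultrafilter.nonempty_of_mem (hUlayer i)
  -- `U` is exactly coherent
  have hUX : U ∈ CohSeq ℓ F hne := by
    refine ⟨hUlayer, fun f hf n => ?_⟩
    obtain ⟨k, hk, heq⟩ := hUcoh f hf n
    have h1 : {s : S | ℓ s = phiFn ℓ hne f n} ∈ Ultrafilter.map f (U n) :=
      map_layer (hreg f hf) (hUlayer n)
    rw [heq] at h1
    have h2 : phiFn ℓ hne f n = k := layer_eq_of_mem (ℓ := ℓ) h1 (hUlayer k)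
    rw [heq, h2]
  -- base idempotent
  obtain ⟨E0, hE0X, hE0id⟩ := ellis_pi (CohSeq ℓ F hne) ⟨U, hUX⟩ cohseq_closed
    (cohseq_mul hlay hreg)
  have hInv0 : InvP (ℓ := ℓ) (F := F) (hne := hne) 0 E0 := by
    refine ⟨hE0X, fun a b hab hb => ?_⟩
    have ha' : a = 0 := by omega
    have hb' : b = 0 := by omega
    subst ha'; subst hb'
    exact ⟨congrFun hE0id 0, congrFun hE0id 0⟩
  -- the recursion
  choose stepV stepInv stepEq using step_exists (ℓ := ℓ) (F := F) (hne := hne) hlay hreg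
  let G : (j : ℕ) → {W : ℕ → Ultrafilter S // InvP (ℓ := ℓ) (F := F) (hne := hne) j W} :=
    fun j => Nat.rec ⟨E0, hInv0⟩ (fun j p => ⟨stepV j p.1 p.2, stepInv j p.1 p.2⟩) j
  have hGsucc : ∀ j, ∀ i ≤ j, (G (j + 1)).1 i = (G j).1 i := by
    intro j i hi
    exact stepEq j (G j).1 (G j).2 i hi
  have hGstab : ∀ i j, i ≤ j → (G j).1 i = (G i).1 i := by
    intro i j hij
    induction j with
    | zero =>
      have : i = 0 := by omega
      subst this; rfl
    | succ j ih =>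
      rcases Nat.lt_or_ge i (j + 1) with h | h
      · have hi : i ≤ j := by omega
        rw [hGsucc j i hi]
        exact ih hi
      · have : i = j + 1 := by omega
        subst this; rfl
  refine ⟨fun j => (G j).1 j, ⟨⟨fun i => (G i).2.1.1 i, fun f hf j => ?_⟩, fun i j hij => ?_⟩⟩
  · refine ⟨phiFn ℓ hne f j, phi_le (hreg f hf) j, ?_⟩
    rw [(G j).2.1.2 f hf j]
    exact hGstab (phiFn ℓ hne f j) j (phi_le (hreg f hf) j)
  · have h1 : (G j).1 i = (G i).1 i := hGstab i j hij
    have h2 := (G j).2.2 i j hij le_rfl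
    constructor
    · show uMul ((G j).1 j) ((G i).1 i) = (G j).1 j
      rw [uMul_eq, ← h1]
      exact h2.2
    · show uMul ((G i).1 i) ((G j).1 j) = (G j).1 j
      rw [uMul_eq, ← h1]
      exact h2.1

end FRamseyAux

/-- If a layered semigroup `(S, ℓ)` with a locally finite collection `F` of regressive
maps admits an `F`-coherent sequence of ultrafilters, then it admits an `F`-Ramsey
sequence of ultrafilters. -/
theorem fRamsey_of_fCoherent {S : Type*} [Semigroup S] (ℓ : S → ℕ)
    (hlay : ∀ s t : S, ℓ (s * t) = max (ℓ s) (ℓ t))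
    (F : Set (S → S)) (hreg : ∀ f ∈ F, IsRegressive ℓ f)
    (hlf : IsLocallyFinite ℓ F)
    (U : ℕ → Ultrafilter S) (hcoh : FCoherent ℓ F U) :
    ∃ V : ℕ → Ultrafilter S, FRamsey ℓ F V := by
  exact FRamseyAux.fRamsey_main ℓ hlay F hreg U hcoh
end

section
/- (Gowers' FIN_k theorem.) For every n ∈ ℕ, every r ≥ 1, and every coloring c : FIN → {0,…,r−1}, there exists a sequence (f_i)_{i≥1} of elements of FIN_n with pairwise disjoint supports such that for every k ≤ n the set FIN_k ∩ { T^{m_1}∘f_{n_1} + T^{m_2}∘f_{n_2} + ⋯ + T^{m_ℓ}∘f_{n_ℓ} : ℓ ≥ 1, n_1 < n_2 < ⋯ < n_ℓ, m_1,…,m_ℓ ∈ ℕ } is c-monochromatic (c is constant on it), where T^m denotes the m-fold iterate of the tetris operation T. -/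
/-- `f` is a member of `FIN`: a finitely supported function `ℕ → ℕ`. -/
def IsFIN (f : ℕ → ℕ) : Prop := (Function.support f).Finite

/-- `f` is a member of `FIN_k`: a finitely supported function whose maximum value is
exactly `k`. -/
def IsFINk (k : ℕ) (f : ℕ → ℕ) : Prop :=
  IsFIN f ∧ (∀ n, f n ≤ k) ∧ ∃ n, f n = k

/-- The tetris operation `T(n) = max(n − 1, 0)`. -/
def tetris : ℕ → ℕ := fun n => n - 1

/-- The set of all sums `T^{m₁} ∘ f_{n₁} + ⋯ + T^{m_ℓ} ∘ f_{n_ℓ}` with `ℓ ≥ 1`,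
`n₁ < ⋯ < n_ℓ` and `m₁, …, m_ℓ ∈ ℕ`. -/
def TetrisCombo (x : ℕ → ℕ → ℕ) : Set (ℕ → ℕ) :=
  { g | ∃ (m : ℕ) (idx : Fin (m + 1) → ℕ) (its : Fin (m + 1) → ℕ),
      StrictMono idx ∧
      g = ∑ a : Fin (m + 1), (tetris^[its a]) ∘ (x (idx a)) }


open Filter Function

attribute [local instance] Ultrafilter.mul Ultrafilter.semigroup

namespace GowersAux

def Fn : Type := ℕ → ℕ

instance : Semigroup Fn where
  mul f g := fun t => max (f t) (g t)
  mul_assoc f g h := funext fun t => max_assoc _ _ _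

lemma mul_apply (f g : Fn) (t : ℕ) : (f * g) t = max (f t) (g t) := rfl

def zf : Fn := fun _ => 0

lemma zf_mul (f : Fn) : zf * f = f := funext fun t => max_eq_right (Nat.zero_le _)
lemma mul_zf (f : Fn) : f * zf = f := funext fun t => max_eq_left (Nat.zero_le _)

def TT : Fn → Fn := fun f => fun t => f t - 1

lemma TT_mul (f g : Fn) : TT (f * g) = TT f * TT g := funext fun t => by
  show max (f t) (g t) - 1 = max (f t - 1) (g t - 1); omega

lemma TT_iter (m : ℕ) (f : Fn) (t : ℕ) : (TT^[m] f) t = f t - m := by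
  induction m generalizing f with
  | zero => simp
  | succ m ih =>
    rw [Function.iterate_succ_apply]
    have := ih (TT f)
    rw [this]
    show f t - 1 - m = f t - (m + 1); omega

lemma TT_zf : TT zf = zf := funext fun t => rfl

end GowersAux

namespace GowersAux

instance : Nonempty Fn := ⟨zf⟩

def FK (k : ℕ) : Set Fn := {f | IsFIN f ∧ (∀ t, f t ≤ k) ∧ ∃ t, f t = k}

def Beyond (m : ℕ) : Set Fn := {f | ∀ t, t < m → f t = 0}

lemma FK_mul {j k : ℕ} {f g : Fn} (hf : f ∈ FK j) (hg : g ∈ FK k) :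
    f * g ∈ FK (max j k) := by
  obtain ⟨hf1, hf2, tf, htf⟩ := hf
  obtain ⟨hg1, hg2, tg, htg⟩ := hg
  refine ⟨?_, ?_, ?_⟩
  · apply Set.Finite.subset (hf1.union hg1)
    intro t ht
    change max (f t) (g t) ≠ 0 at ht
    show f t ≠ 0 ∨ g t ≠ 0
    omega
  · intro t; rw [mul_apply]; exact max_le_max (hf2 t) (hg2 t)
  · rcases le_total j k with h | h
    · exact ⟨tg, by rw [mul_apply, htg]; have := hf2 tg; omega⟩
    · exact ⟨tf, by rw [mul_apply, htf]; have := hg2 tf; omega⟩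

lemma TT_FK {k : ℕ} {f : Fn} (hf : f ∈ FK (k+1)) : TT f ∈ FK k := by
  obtain ⟨hf1, hf2, tf, htf⟩ := hf
  refine ⟨?_, fun t => ?_, ⟨tf, ?_⟩⟩
  · apply Set.Finite.subset hf1
    intro t ht
    change TT f t ≠ 0 at ht
    show f t ≠ 0
    intro h; apply ht; show f t - 1 = 0; omega
  · show f t - 1 ≤ k; have := hf2 t; omega
  · show f tf - 1 = k; omega

lemma Beyond_mul {m : ℕ} {f g : Fn} (hf : f ∈ Beyond m) (hg : g ∈ Beyond m) :
    f * g ∈ Beyond m := fun t ht => by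
  rw [mul_apply, hf t ht, hg t ht]; rfl

lemma TT_Beyond {m : ℕ} {f : Fn} (hf : f ∈ Beyond m) : TT f ∈ Beyond m := fun t ht => by
  show f t - 1 = 0; rw [hf t ht]

lemma Beyond_anti {m m' : ℕ} (h : m ≤ m') : Beyond m' ⊆ Beyond m :=
  fun f hf t ht => hf t (lt_of_lt_of_le ht h)

lemma zf_FK0 : zf ∈ FK 0 := by
  refine ⟨?_, fun _ => le_refl 0, ⟨0, rfl⟩⟩
  have : Function.support zf = ∅ := by
    ext t; show zf t ≠ 0 ↔ False; simp [zf]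
  show (Function.support zf).Finite
  rw [this]; exact Set.finite_empty

lemma zf_Beyond (m : ℕ) : zf ∈ Beyond m := fun _ _ => rfl

/-- the delta function with value k at position m -/
lemma delta_mem (k m : ℕ) : (fun t => if t = m then k else 0 : Fn) ∈ FK k ∩ Beyond m := by
  constructor
  · refine ⟨?_, fun t => ?_, ⟨m, by simp⟩⟩
    · apply Set.Finite.subset (Set.finite_singleton m)
      intro t ht
      simp only [Function.mem_support] at ht
      by_contra h
      simp only [Set.mem_singleton_iff] at h
      rw [if_neg h] at ht
      exact ht rfl
    · dsimp only; split <;> omega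
  · intro t ht
    dsimp only
    rw [if_neg (by omega)]

abbrev UF := Ultrafilter Fn

def SS (k : ℕ) : Set UF := {U | FK k ∈ U ∧ ∀ m, Beyond m ∈ U}

lemma SS_nonempty (k : ℕ) : (SS k).Nonempty := by
  have hne : ∀ m, (FK k ∩ Beyond m).Nonempty := fun m => ⟨_, delta_mem k m⟩
  let F : Filter Fn := ⨅ m, 𝓟 (FK k ∩ Beyond m)
  have hdir : Directed (· ≥ ·) (fun m => (𝓟 (FK k ∩ Beyond m) : Filter Fn)) := by
    intro m m'
    refine ⟨max m m', ?_, ?_⟩ <;>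
      exact principal_mono.mpr (Set.inter_subset_inter_right _ (Beyond_anti (by omega)))
  have : F.NeBot := iInf_neBot_of_directed hdir (fun m => principal_neBot_iff.mpr (hne m))
  refine ⟨Ultrafilter.of F, ?_, fun m => ?_⟩
  · exact (Ultrafilter.of_le F) (mem_iInf_of_mem 0 (mem_principal.mpr Set.inter_subset_left))
  · exact (Ultrafilter.of_le F) (mem_iInf_of_mem m (mem_principal.mpr Set.inter_subset_right))

end GowersAux

namespace GowersAux

lemma mem_mulUF {U V : UF} {s : Set Fn} :
    s ∈ U * V ↔ {g | {h | g * h ∈ s} ∈ V} ∈ U := Iff.rfl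

lemma SS_mul {j k : ℕ} {U V : UF} (hU : U ∈ SS j) (hV : V ∈ SS k) :
    U * V ∈ SS (max j k) := by
  constructor
  · rw [mem_mulUF]
    apply Filter.mem_of_superset hU.1
    intro g hg
    apply Filter.mem_of_superset hV.1
    intro h hh
    exact FK_mul hg hh
  · intro m
    rw [mem_mulUF]
    apply Filter.mem_of_superset (hU.2 m)
    intro g hg
    apply Filter.mem_of_superset (hV.2 m)
    intro h hh
    exact Beyond_mul hg hh

lemma map_TT_mul (U V : UF) :
    Ultrafilter.map TT (U * V) = Ultrafilter.map TT U * Ultrafilter.map TT V := by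
  apply Ultrafilter.ext
  intro s
  rw [Ultrafilter.mem_map, mem_mulUF, mem_mulUF, Ultrafilter.mem_map]
  have : TT ⁻¹' {g | {h | g * h ∈ s} ∈ Ultrafilter.map TT V} =
      {g | {h | g * h ∈ TT ⁻¹' s} ∈ V} := by
    ext g
    simp only [Set.mem_preimage, Set.mem_setOf_eq, Ultrafilter.mem_map]
    have : TT ⁻¹' {h | TT g * h ∈ s} = {h | g * h ∈ TT ⁻¹' s} := by
      ext h
      simp only [Set.mem_preimage, Set.mem_setOf_eq, TT_mul]
    rw [this]
    exact Iff.rfl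
  rw [this]

lemma pure_zf_mul (V : UF) : (pure zf : UF) * V = V := by
  apply Ultrafilter.ext
  intro s
  rw [mem_mulUF]
  rw [Ultrafilter.mem_pure]
  show {h | zf * h ∈ s} ∈ V ↔ s ∈ V
  have : {h | zf * h ∈ s} = s := by ext h; simp [zf_mul]
  rw [this]

lemma mul_pure_zf (V : UF) : V * (pure zf : UF) = V := by
  apply Ultrafilter.ext
  intro s
  rw [mem_mulUF]
  have : {g | {h | g * h ∈ s} ∈ (pure zf : UF)} = s := by
    ext g
    rw [Set.mem_setOf_eq, Ultrafilter.mem_pure]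
    show zf ∈ {h | g * h ∈ s} ↔ g ∈ s
    rw [Set.mem_setOf_eq, mul_zf]
  rw [this]

lemma map_TT_SS1 {U : UF} (hU : U ∈ SS 1) : Ultrafilter.map TT U = pure zf := by
  apply Ultrafilter.ext
  intro s
  rw [Ultrafilter.mem_map, Ultrafilter.mem_pure]
  constructor
  · intro h
    obtain ⟨f, hf1, hf2⟩ := Ultrafilter.nonempty_of_mem (Filter.inter_mem h hU.1)
    have : TT f = zf := by
      funext t
      show f t - 1 = 0
      have := hf2.2.1 t
      omega
    rw [← this]; exact hf1
  · intro h
    apply Filter.mem_of_superset hU.1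
    intro f hf
    show TT f ∈ s
    have : TT f = zf := by
      funext t
      show f t - 1 = 0
      have := hf.2.1 t
      omega
    rw [this]; exact h

lemma continuous_mapTT : Continuous (Ultrafilter.map TT : UF → UF) := by
  apply ultrafilterBasis_is_basis.continuous_iff.2
  intro s hs
  obtain ⟨a, rfl⟩ := hs
  have : (Ultrafilter.map TT : UF → UF) ⁻¹' {u | a ∈ u} = {u : UF | TT ⁻¹' a ∈ u} := by
    ext u; simp [Ultrafilter.mem_map]
  rw [this]
  exact ultrafilter_isOpen_basic _

lemma SS_closed (k : ℕ) : IsClosed (SS k) := by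
  have : SS k = {U : UF | FK k ∈ U} ∩ ⋂ m, {U : UF | Beyond m ∈ U} := by
    ext U; simp [SS, Set.mem_iInter]
  rw [this]
  exact (ultrafilter_isClosed_basic _).inter (isClosed_iInter fun m => ultrafilter_isClosed_basic _)

def sigmaf : Fn → Fn := fun f t => if f t = 0 then 0 else f t + 1

lemma TT_sigmaf : TT ∘ sigmaf = id := by
  funext f
  show TT (sigmaf f) = f
  funext t
  show (if f t = 0 then 0 else f t + 1) - 1 = f t
  split <;> omega

lemma sigmaf_FK {k : ℕ} (hk : 1 ≤ k) {f : Fn} (hf : f ∈ FK k) : sigmaf f ∈ FK (k+1) := by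
  obtain ⟨h1, h2, t0, ht0⟩ := hf
  refine ⟨?_, fun t => ?_, ⟨t0, ?_⟩⟩
  · apply Set.Finite.subset h1
    intro t ht
    change sigmaf f t ≠ 0 at ht
    show f t ≠ 0
    intro h; apply ht; show (if f t = 0 then 0 else f t + 1) = 0; rw [if_pos h]
  · show (if f t = 0 then 0 else f t + 1) ≤ k + 1
    have := h2 t; split <;> omega
  · show (if f t0 = 0 then 0 else f t0 + 1) = k + 1
    rw [ht0, if_neg (by omega)]

lemma sigmaf_Beyond {m : ℕ} {f : Fn} (hf : f ∈ Beyond m) : sigmaf f ∈ Beyond m := by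
  intro t ht
  show (if f t = 0 then 0 else f t + 1) = 0
  rw [if_pos (hf t ht)]

end GowersAux

namespace GowersAux

/-- One step: given a suitable idempotent `U` at level `k`, produce one at level `k+1`. -/
lemma step_idem (k : ℕ) (U : UF) (hU : U ∈ SS k) (hidem : U * U = U)
    (hT1 : Ultrafilter.map TT U * U = U) (hT2 : U * Ultrafilter.map TT U = U) :
    ∃ V ∈ SS (k+1), V * V = V ∧ Ultrafilter.map TT V = U ∧ U * V = V ∧ V * U = V := by
  -- the compact subsemigroup A'
  set A' : Set UF := {V | V ∈ SS (k+1) ∧ Ultrafilter.map TT V = U ∧ V * U = V} with hA'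
  -- a base point V₀ with map TT V₀ = U and V₀ ∈ SS (k+1)
  have hbase : ∃ V₀ ∈ SS (k+1), Ultrafilter.map TT V₀ = U := by
    rcases Nat.eq_zero_or_pos k with hk | hk
    · subst hk
      obtain ⟨V₀, hV₀⟩ := SS_nonempty 1
      refine ⟨V₀, hV₀, ?_⟩
      rw [map_TT_SS1 hV₀]
      -- U ∈ SS 0 and idempotent: show U = pure zf
      -- every element of FK 0 is zf
      have hFK0 : FK 0 ⊆ {zf} := by
        intro f hf
        have : f = zf := funext fun t => Nat.le_zero.mp (hf.2.1 t)
        simp [this]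
      apply Ultrafilter.ext
      intro s
      rw [Ultrafilter.mem_pure]
      constructor
      · intro hs
        apply Filter.mem_of_superset hU.1
        intro f hf
        have := hFK0 hf
        simp only [Set.mem_singleton_iff] at this
        rwa [this]
      · intro hs
        obtain ⟨f, hf1, hf2⟩ := Ultrafilter.nonempty_of_mem (Filter.inter_mem hs hU.1)
        have := hFK0 hf2
        simp only [Set.mem_singleton_iff] at this
        rwa [← this]
    · refine ⟨Ultrafilter.map sigmaf U, ⟨?_, fun m => ?_⟩, ?_⟩
      · rw [Ultrafilter.mem_map]
        exact Filter.mem_of_superset hU.1 (fun f hf => sigmaf_FK hk hf)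
      · rw [Ultrafilter.mem_map]
        exact Filter.mem_of_superset (hU.2 m) (fun f hf => sigmaf_Beyond hf)
      · rw [Ultrafilter.map_map, TT_sigmaf, Ultrafilter.map_id]
  obtain ⟨V₀, hV₀S, hV₀T⟩ := hbase
  -- A' is nonempty
  have hA'ne : A'.Nonempty := by
    refine ⟨V₀ * U, ⟨?_, ?_, ?_⟩⟩
    · have := SS_mul hV₀S hU
      rwa [max_eq_left (Nat.le_succ k)] at this
    · rw [map_TT_mul, hV₀T]
      exact hT2
    · rw [mul_assoc, hidem]
  -- A' is closed
  have hA'cl : IsClosed A' := by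
    apply IsClosed.inter (SS_closed (k+1))
    apply IsClosed.inter
    · exact isClosed_eq continuous_mapTT continuous_const
    · exact isClosed_eq (Ultrafilter.continuous_mul_left U) continuous_id
  -- A' is a subsemigroup
  have hA'mul : ∀ V ∈ A', ∀ W ∈ A', V * W ∈ A' := by
    rintro V ⟨hV1, hV2, hV3⟩ W ⟨hW1, hW2, hW3⟩
    refine ⟨?_, ?_, ?_⟩
    · have := SS_mul hV1 hW1
      rwa [max_self] at this
    · rw [map_TT_mul, hV2, hW2, hidem]
    · rw [mul_assoc, hW3]
  obtain ⟨W, hWA, hWidem⟩ :=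
    exists_idempotent_in_compact_subsemigroup Ultrafilter.continuous_mul_left A' hA'ne
      hA'cl.isCompact hA'mul
  obtain ⟨hWS, hWT, hWU⟩ := hWA
  refine ⟨U * W, ?_, ?_, ?_, ?_, ?_⟩
  · have := SS_mul hU hWS
    rwa [max_eq_right (Nat.le_succ k)] at this
  · have h1 : (U * W) * (U * W) = U * ((W * U) * W) := by
      rw [mul_assoc U W (U*W), ← mul_assoc W U W]
    rw [h1, hWU, hWidem]
  · rw [map_TT_mul, hWT, hT1]
  · rw [← mul_assoc, hidem]
  · rw [mul_assoc, hWU]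

/-- The chain of compatible idempotents. -/
lemma exists_chain (n : ℕ) : ∃ Uc : ℕ → UF,
    Uc 0 = pure zf ∧
    (∀ k, k ≤ n → Uc k ∈ SS k) ∧
    (∀ k, k ≤ n → Uc k * Uc k = Uc k) ∧
    (∀ j k, j ≤ k → k ≤ n → Uc j * Uc k = Uc k ∧ Uc k * Uc j = Uc k) ∧
    (∀ k, 1 ≤ k → k ≤ n → Ultrafilter.map TT (Uc k) = Uc (k-1)) := by
  induction n with
  | zero =>
    refine ⟨fun _ => pure zf, rfl, ?_, ?_, ?_, ?_⟩
    · intro k hk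
      interval_cases k
      exact ⟨Ultrafilter.mem_pure.mpr zf_FK0, fun m => Ultrafilter.mem_pure.mpr (zf_Beyond m)⟩
    · intro k _; exact mul_pure_zf _
    · intro j k _ _; exact ⟨pure_zf_mul _, mul_pure_zf _⟩
    · intro k h1 h2; omega
  | succ n ih =>
    obtain ⟨Uc, h0, hSS, hid, habs, hTT⟩ := ih
    -- derive the hT1, hT2 hypotheses at level n
    have hT1 : Ultrafilter.map TT (Uc n) * Uc n = Uc n := by
      rcases Nat.eq_zero_or_pos n with hn | hn
      · subst hn; rw [h0]
        have : Ultrafilter.map TT (pure zf : UF) = (pure zf : UF) := by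
          rw [Ultrafilter.map_pure, TT_zf]
        rw [this, pure_zf_mul]
      · rw [hTT n hn le_rfl]
        exact (habs (n-1) n (by omega) le_rfl).1
    have hT2 : Uc n * Ultrafilter.map TT (Uc n) = Uc n := by
      rcases Nat.eq_zero_or_pos n with hn | hn
      · subst hn; rw [h0]
        have : Ultrafilter.map TT (pure zf : UF) = (pure zf : UF) := by
          rw [Ultrafilter.map_pure, TT_zf]
        rw [this, mul_pure_zf]
      · rw [hTT n hn le_rfl]
        exact (habs (n-1) n (by omega) le_rfl).2
    obtain ⟨V, hVS, hVid, hVT, hUV, hVU⟩ :=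
      step_idem n (Uc n) (hSS n le_rfl) (hid n le_rfl) hT1 hT2
    refine ⟨Function.update Uc (n+1) V, ?_, ?_, ?_, ?_, ?_⟩
    · rw [Function.update_of_ne (by omega), h0]
    · intro k hk
      rcases Nat.lt_or_ge k (n+1) with h | h
      · rw [Function.update_of_ne (by omega)]; exact hSS k (by omega)
      · have : k = n + 1 := by omega
        subst this; rw [Function.update_self]; exact hVS
    · intro k hk
      rcases Nat.lt_or_ge k (n+1) with h | h
      · rw [Function.update_of_ne (by omega)]; exact hid k (by omega)
      · have : k = n + 1 := by omega
        subst this; rw [Function.update_self]; exact hVid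
    · intro j k hjk hk
      rcases Nat.lt_or_ge k (n+1) with h | h
      · rw [Function.update_of_ne (show j ≠ n+1 by omega),
          Function.update_of_ne (show k ≠ n+1 by omega)]
        exact habs j k hjk (by omega)
      · have hk1 : k = n + 1 := by omega
        subst hk1
        rw [Function.update_self]
        rcases Nat.lt_or_ge j (n+1) with hj | hj
        · rw [Function.update_of_ne (show j ≠ n+1 by omega)]
          constructor
          · calc Uc j * V = Uc j * (Uc n * V) := by rw [hUV]
            _ = (Uc j * Uc n) * V := by rw [mul_assoc]
            _ = Uc n * V := by rw [(habs j n (by omega) le_rfl).1]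
            _ = V := hUV
          · calc V * Uc j = (V * Uc n) * Uc j := by rw [hVU]
            _ = V * (Uc n * Uc j) := by rw [mul_assoc]
            _ = V * Uc n := by rw [(habs j n (by omega) le_rfl).2]
            _ = V := hVU
        · have : j = n + 1 := by omega
          subst this
          rw [Function.update_self]
          exact ⟨hVid, hVid⟩
    · intro k h1 h2
      rcases Nat.lt_or_ge k (n+1) with h | h
      · rw [Function.update_of_ne (show k ≠ n+1 by omega),
          Function.update_of_ne (show k - 1 ≠ n+1 by omega)]
        exact hTT k h1 (by omega)
      · have : k = n + 1 := by omega
        subst this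
        rw [Function.update_self, Function.update_of_ne (by omega)]
        simpa using hVT

end GowersAux

namespace GowersAux

/-! ### The combinatorial layer -/

def termF (f : Fn) (m : ℕ) : Fn := fun t => f t - m

/-- combo of the sequence `xf` below stage `i`, selected by `σ`. -/
def Gc (xf : ℕ → Fn) (σ : ℕ → Option ℕ) : ℕ → Fn
  | 0 => zf
  | i+1 => match σ i with
    | none => Gc xf σ i
    | some m => Gc xf σ i * termF (xf i) m

/-- the level of a combo -/
def Lc (n : ℕ) (σ : ℕ → Option ℕ) : ℕ → ℕ
  | 0 => 0
  | i+1 => match σ i with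
    | none => Lc n σ i
    | some m => max (Lc n σ i) (n - m)

def Valid (n : ℕ) (σ : ℕ → Option ℕ) : Prop := ∀ t m, σ t = some m → m < n

lemma Gc_zero (xf : ℕ → Fn) (σ : ℕ → Option ℕ) : Gc xf σ 0 = zf := rfl

lemma Gc_succ_none {σ : ℕ → Option ℕ} {i : ℕ} (xf : ℕ → Fn) (h : σ i = none) :
    Gc xf σ (i+1) = Gc xf σ i := by
  have h0 : Gc xf σ (i+1) = match σ i with
    | none => Gc xf σ i
    | some m => Gc xf σ i * termF (xf i) m := rfl
  rw [h0, h]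

lemma Gc_succ_some {σ : ℕ → Option ℕ} {i m : ℕ} (xf : ℕ → Fn) (h : σ i = some m) :
    Gc xf σ (i+1) = Gc xf σ i * termF (xf i) m := by
  have h0 : Gc xf σ (i+1) = match σ i with
    | none => Gc xf σ i
    | some m => Gc xf σ i * termF (xf i) m := rfl
  rw [h0, h]

lemma Lc_zero (n : ℕ) (σ : ℕ → Option ℕ) : Lc n σ 0 = 0 := rfl

lemma Lc_succ_none {σ : ℕ → Option ℕ} {i : ℕ} (n : ℕ) (h : σ i = none) :
    Lc n σ (i+1) = Lc n σ i := by
  have h0 : Lc n σ (i+1) = match σ i with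
    | none => Lc n σ i
    | some m => max (Lc n σ i) (n - m) := rfl
  rw [h0, h]

lemma Lc_succ_some {σ : ℕ → Option ℕ} {i m : ℕ} (n : ℕ) (h : σ i = some m) :
    Lc n σ (i+1) = max (Lc n σ i) (n - m) := by
  have h0 : Lc n σ (i+1) = match σ i with
    | none => Lc n σ i
    | some m => max (Lc n σ i) (n - m) := rfl
  rw [h0, h]

lemma Gc_congr {xf xf' : ℕ → Fn} {σ : ℕ → Option ℕ} {i : ℕ}
    (h : ∀ t, t < i → xf t = xf' t) : Gc xf σ i = Gc xf' σ i := by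
  induction i with
  | zero => rfl
  | succ i ih =>
    have hih := ih (fun t ht => h t (by omega))
    rcases hm : σ i with _ | m
    · rw [Gc_succ_none xf hm, Gc_succ_none xf' hm, hih]
    · rw [Gc_succ_some xf hm, Gc_succ_some xf' hm, hih, h i (by omega)]

lemma Lc_le {n : ℕ} {σ : ℕ → Option ℕ} (i : ℕ) : Lc n σ i ≤ n := by
  induction i with
  | zero => exact Nat.zero_le n
  | succ i ih =>
    rcases hm : σ i with _ | m
    · rw [Lc_succ_none n hm]; exact ih
    · rw [Lc_succ_some n hm]; exact max_le ih (Nat.sub_le n m)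

lemma Lc_zero_G {n : ℕ} {xf : ℕ → Fn} {σ : ℕ → Option ℕ} (hσ : Valid n σ) {i : ℕ}
    (h : Lc n σ i = 0) : Gc xf σ i = zf := by
  induction i with
  | zero => rfl
  | succ i ih =>
    rcases hm : σ i with _ | m
    · rw [Lc_succ_none n hm] at h
      rw [Gc_succ_none xf hm]
      exact ih h
    · rw [Lc_succ_some n hm] at h
      exfalso
      have := hσ i m hm
      simp only [Nat.max_eq_zero_iff] at h
      omega

lemma Gc_sup (xf : ℕ → Fn) (σ : ℕ → Option ℕ) (i : ℕ) (u : ℕ) :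
    Gc xf σ i u = (Finset.range i).sup (fun t => (σ t).elim 0 (fun m => xf t u - m)) := by
  induction i with
  | zero => rfl
  | succ i ih =>
    rw [Finset.range_add_one, Finset.sup_insert]
    rcases hm : σ i with _ | m
    · rw [Gc_succ_none xf hm, ih]
      simp only [hm, Option.elim]
      exact (sup_eq_right.mpr (Nat.zero_le _)).symm
    · rw [Gc_succ_some xf hm]
      rw [show (Gc xf σ i * termF (xf i) m) u = max (Gc xf σ i u) (xf i u - m) from rfl]
      rw [ih]
      simp only [hm, Option.elim]
      exact sup_comm _ _

/-- All combo/level pairs at stage `i` form a finite set. -/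
lemma Gc_finite (n : ℕ) (xf : ℕ → Fn) (i : ℕ) :
    {p : Fn × ℕ | ∃ σ, Valid n σ ∧ p = (Gc xf σ i, Lc n σ i)}.Finite := by
  induction i with
  | zero =>
    apply Set.Finite.subset (Set.finite_singleton (zf, 0))
    rintro p ⟨σ, _, rfl⟩
    rfl
  | succ i ih =>
    set D := {p : Fn × ℕ | ∃ σ, Valid n σ ∧ p = (Gc xf σ i, Lc n σ i)} with hD
    have : {p : Fn × ℕ | ∃ σ, Valid n σ ∧ p = (Gc xf σ (i+1), Lc n σ (i+1))} ⊆
        D ∪ (fun q : (Fn × ℕ) × ℕ =>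
              (q.1.1 * termF (xf i) q.2, max q.1.2 (n - q.2))) ''
            (D ×ˢ (Set.Iio n)) := by
      rintro p ⟨σ, hσ, rfl⟩
      rcases hm : σ i with _ | m
      · left
        exact ⟨σ, hσ, by rw [Gc_succ_none xf hm, Lc_succ_none n hm]⟩
      · right
        refine ⟨((Gc xf σ i, Lc n σ i), m), ⟨⟨σ, hσ, rfl⟩, hσ i m hm⟩, ?_⟩
        rw [Gc_succ_some xf hm, Lc_succ_some n hm]
    exact Set.Finite.subset (ih.union ((ih.prod (Set.finite_Iio n)).image _)) this

/-- Context: the chain of ultrafilters together with monochromatic large sets. -/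
structure Ctx (n r : ℕ) where
  c : Fn → Fin r
  Uc : ℕ → UF
  hSS : ∀ k, k ≤ n → Uc k ∈ SS k
  hid : ∀ k, k ≤ n → Uc k * Uc k = Uc k
  habs : ∀ j k, j ≤ k → k ≤ n → Uc j * Uc k = Uc k ∧ Uc k * Uc j = Uc k
  hTT : ∀ k, 1 ≤ k → k ≤ n → Ultrafilter.map TT (Uc k) = Uc (k-1)
  gam : ℕ → Fin r
  hgam : ∀ k, 1 ≤ k → k ≤ n → ({f | c f = gam k} ∩ FK k) ∈ Uc k

namespace Ctx

variable {n r : ℕ} (C : Ctx n r)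

def A (k : ℕ) : Set Fn := {f | C.c f = C.gam k} ∩ FK k

def A1 (k : ℕ) : Set Fn :=
  {g | g ∈ C.A k ∧ ∀ k', 1 ≤ k' → k' ≤ n → {h | g * h ∈ C.A (max k k')} ∈ C.Uc k'}

lemma A1_subset (k : ℕ) : C.A1 k ⊆ C.A k := fun _ h => h.1

lemma A_subset_FK (k : ℕ) : C.A k ⊆ FK k := fun _ h => h.2

lemma mul_eq {j k : ℕ} (hj : j ≤ n) (hk : k ≤ n) : C.Uc j * C.Uc k = C.Uc (max j k) := by
  rcases le_total j k with h | h
  · rw [max_eq_right h]; exact (C.habs j k h hk).1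
  · rw [max_eq_left h]; exact (C.habs k j h hj).2

lemma A1_mem {k : ℕ} (h1 : 1 ≤ k) (h2 : k ≤ n) : C.A1 k ∈ C.Uc k := by
  have : C.A1 k = C.A k ∩
      ⋂ k' ∈ Finset.Icc 1 n, {g | {h | g * h ∈ C.A (max k k')} ∈ C.Uc k'} := by
    ext g
    simp only [A1, Set.mem_setOf_eq, Set.mem_inter_iff, Set.mem_iInter, Finset.mem_Icc]
    constructor
    · rintro ⟨hg, hg2⟩; exact ⟨hg, fun k' hk' => hg2 k' hk'.1 hk'.2⟩
    · rintro ⟨hg, hg2⟩; exact ⟨hg, fun k' h1' h2' => hg2 k' ⟨h1', h2'⟩⟩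
  rw [this]
  apply Filter.inter_mem (C.hgam k h1 h2)
  rw [Filter.biInter_finset_mem]
  intro k' hk'
  rw [Finset.mem_Icc] at hk'
  have hm : C.A (max k k') ∈ C.Uc k * C.Uc k' := by
    rw [C.mul_eq h2 hk'.2]
    exact C.hgam (max k k') (le_trans h1 (le_max_left _ _)) (max_le h2 hk'.2)
  exact hm

lemma A1_star {g : Fn} {j k : ℕ} (hj1 : 1 ≤ j) (hj2 : j ≤ n) (hg : g ∈ C.A1 j)
    (hk1 : 1 ≤ k) (hk2 : k ≤ n) : {h | g * h ∈ C.A1 (max j k)} ∈ C.Uc k := by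
  have base : {h | g * h ∈ C.A (max j k)} ∈ C.Uc k := hg.2 k hk1 hk2
  have rest : ∀ k' ∈ Finset.Icc 1 n,
      {h | {h' | g * (h * h') ∈ C.A (max j (max k k'))} ∈ C.Uc k'} ∈ C.Uc k := by
    intro k' hk'
    rw [Finset.mem_Icc] at hk'
    have hmem : {w | g * w ∈ C.A (max j (max k k'))} ∈ C.Uc (max k k') :=
      hg.2 (max k k') (le_trans hk1 (le_max_left _ _)) (max_le hk2 hk'.2)
    rw [← C.mul_eq hk2 hk'.2] at hmem
    exact hmem
  have : {h | g * h ∈ C.A (max j k)} ∩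
      (⋂ k' ∈ Finset.Icc 1 n,
        {h | {h' | g * (h * h') ∈ C.A (max j (max k k'))} ∈ C.Uc k'}) ⊆
      {h | g * h ∈ C.A1 (max j k)} := by
    intro h hh
    obtain ⟨hh1, hh2⟩ := hh
    simp only [Set.mem_iInter, Finset.mem_Icc] at hh2
    refine ⟨hh1, ?_⟩
    intro k' h1' h2'
    have := hh2 k' ⟨h1', h2'⟩
    have heq : {h' | g * h * h' ∈ C.A (max (max j k) k')} =
        {h' | g * (h * h') ∈ C.A (max j (max k k'))} := by
      ext h'
      rw [Set.mem_setOf_eq, Set.mem_setOf_eq, mul_assoc, max_assoc]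
    rw [heq]
    exact this
  apply Filter.mem_of_superset _ this
  apply Filter.inter_mem base
  rw [Filter.biInter_finset_mem]
  exact rest

end Ctx

end GowersAux

namespace GowersAux

structure St where
  xf : ℕ → Fn
  bd : ℕ → ℕ
  B : ℕ → Set Fn

namespace Ctx

variable {n r : ℕ}

def Good (C : Ctx n r) (i : ℕ) (s : St) : Prop :=
  (∀ t, t < i → s.xf t ∈ FK n ∧ s.xf t ∈ Beyond (s.bd t) ∧
    (∀ u, s.bd (t+1) ≤ u → s.xf t u = 0) ∧ s.bd t ≤ s.bd (t+1)) ∧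
  (∀ k, 1 ≤ k → k ≤ n → s.B k ∈ C.Uc k ∧ s.B k ⊆ C.A1 k ∧ s.B k ⊆ Beyond (s.bd i)) ∧
  (∀ σ, Valid n σ → 1 ≤ Lc n σ i → Gc s.xf σ i ∈ C.A1 (Lc n σ i)) ∧
  (∀ σ, Valid n σ → 1 ≤ Lc n σ i → ∀ k, 1 ≤ k → k ≤ n →
    ∀ h ∈ s.B k, Gc s.xf σ i * h ∈ C.A1 (max (Lc n σ i) k))

lemma map_iter (C : Ctx n r) (hn : 1 ≤ n) {d : ℕ} (hd : d ≤ n - 1) :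
    Ultrafilter.map (TT^[d]) (C.Uc n) = C.Uc (n - d) := by
  induction d with
  | zero =>
    rw [Function.iterate_zero]
    simpa using Ultrafilter.map_id (C.Uc n)
  | succ d ih =>
    have h1 : d ≤ n - 1 := by omega
    rw [Function.iterate_succ']
    rw [← Ultrafilter.map_map, ih h1]
    have := C.hTT (n - d) (by omega) (by omega)
    rw [this, show n - d - 1 = n - (d+1) from by omega]

lemma step_ex (C : Ctx n r) (hn : 1 ≤ n) (i : ℕ) (s : St) (hs : C.Good i s) :
    ∃ s' : St, C.Good (i+1) s' ∧ (∀ t, t < i → s'.xf t = s.xf t) ∧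
      (∀ t, t ≤ i → s'.bd t = s.bd t) := by
  obtain ⟨hs1, hs2, hs3, hs4⟩ := hs
  -- the set from which we pick the next element
  set P : Set Fn := (FK n ∩ Beyond (s.bd i)) ∩
    ⋂ k ∈ Finset.Icc 1 n, (TT^[n-k]) ⁻¹' (s.B k) with hPdef
  have hP : P ∈ C.Uc n := by
    apply Filter.inter_mem
    · exact Filter.inter_mem (C.hSS n le_rfl).1 ((C.hSS n le_rfl).2 _)
    · rw [Filter.biInter_finset_mem]
      intro k hk
      rw [Finset.mem_Icc] at hk
      have hmap := C.map_iter hn (d := n - k) (by omega)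
      rw [show n - (n - k) = k from by omega] at hmap
      have hmem : s.B k ∈ Ultrafilter.map (TT^[n-k]) (C.Uc n) := by
        rw [hmap]; exact (hs2 k hk.1 hk.2).1
      exact Ultrafilter.mem_map.mp hmem
  obtain ⟨f, hfP⟩ := Ultrafilter.nonempty_of_mem hP
  have hfFK : f ∈ FK n := hfP.1.1
  have hfBey : f ∈ Beyond (s.bd i) := hfP.1.2
  obtain ⟨b, hb⟩ := hfFK.1.bddAbove
  set N := max (s.bd i) (b+1) with hN
  set xf' := Function.update s.xf i f with hxf'
  have hagree : ∀ t, t < i → xf' t = s.xf t := fun t ht =>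
    Function.update_of_ne (by omega) _ _
  have hxfi : xf' i = f := Function.update_self _ _ _
  have hterm : ∀ m, m < n → termF f m ∈ s.B (n - m) := by
    intro m hm
    have h1 : f ∈ (TT^[n - (n - m)]) ⁻¹' (s.B (n - m)) := by
      have h2 := hfP.2
      rw [Set.mem_iInter₂] at h2
      exact h2 (n - m) (Finset.mem_Icc.mpr ⟨by omega, by omega⟩)
    rw [show n - (n - m) = m from by omega] at h1
    have h3 : termF f m = TT^[m] f := funext fun t => (TT_iter m f t).symm
    rw [h3]
    exact h1
  -- new combos are in A1
  have hP3 : ∀ σ, Valid n σ → 1 ≤ Lc n σ (i+1) → Gc xf' σ (i+1) ∈ C.A1 (Lc n σ (i+1)) := by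
    intro σ hσ hL
    have hGi : Gc xf' σ i = Gc s.xf σ i := Gc_congr hagree
    rcases hm : σ i with _ | m
    · rw [Gc_succ_none xf' hm, hGi, Lc_succ_none n hm]
      rw [Lc_succ_none n hm] at hL
      exact hs3 σ hσ hL
    · have hmn := hσ i m hm
      rw [Gc_succ_some xf' hm, hGi, hxfi, Lc_succ_some n hm]
      rcases Nat.eq_zero_or_pos (Lc n σ i) with h0 | h1
      · rw [Lc_zero_G hσ h0, zf_mul, h0]
        rw [show max 0 (n - m) = n - m from by omega]
        exact (hs2 (n-m) (by omega) (by omega)).2.1 (hterm m hmn)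
      · exact hs4 σ hσ h1 (n-m) (by omega) (by omega) _ (hterm m hmn)
  -- the finite set of new combos
  set D := {p : Fn × ℕ | ∃ σ, Valid n σ ∧ 1 ≤ p.2 ∧ p = (Gc xf' σ (i+1), Lc n σ (i+1))}
    with hDdef
  have hDfin : D.Finite := by
    apply (Gc_finite n xf' (i+1)).subset
    rintro p ⟨σ, hσ, _, rfl⟩
    exact ⟨σ, hσ, rfl⟩
  set B' : ℕ → Set Fn := fun k =>
    (s.B k ∩ Beyond N) ∩ ⋂ p ∈ D, {h | p.1 * h ∈ C.A1 (max p.2 k)} with hB'def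
  have hB'mem : ∀ k, 1 ≤ k → k ≤ n → B' k ∈ C.Uc k := by
    intro k h1 h2
    apply Filter.inter_mem
    · exact Filter.inter_mem (hs2 k h1 h2).1 ((C.hSS k h2).2 N)
    · rw [Filter.biInter_mem hDfin]
      rintro ⟨g, j⟩ hp
      obtain ⟨σ, hσ, hj1, heq⟩ := hp
      have hg : g = Gc xf' σ (i+1) := congrArg Prod.fst heq
      have hj : j = Lc n σ (i+1) := congrArg Prod.snd heq
      have hj2 : j ≤ n := by rw [hj]; exact Lc_le _
      have hgA : g ∈ C.A1 j := by
        rw [hg, hj]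
        exact hP3 σ hσ (by rw [← hj]; exact hj1)
      exact C.A1_star hj1 hj2 hgA h1 h2
  refine ⟨⟨xf', fun t => if t ≤ i then s.bd t else N, B'⟩, ⟨?_, ?_, ?_, ?_⟩, ?_, ?_⟩
  · -- P1
    intro t ht
    rcases Nat.lt_or_ge t i with h | h
    · obtain ⟨q1, q2, q3, q4⟩ := hs1 t h
      dsimp only
      rw [hagree t h, if_pos (by omega : t ≤ i), if_pos (by omega : t + 1 ≤ i)]
      exact ⟨q1, q2, q3, q4⟩
    · have hti : t = i := by omega
      dsimp only
      rw [hti, if_pos (le_refl i), if_neg (by omega : ¬ i + 1 ≤ i), hxfi]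
      refine ⟨hfFK, hfBey, ?_, le_max_left _ _⟩
      intro u hu
      by_contra hne
      have : u ∈ Function.support f := hne
      have := hb this
      omega
  · -- P2
    intro k h1 h2
    dsimp only
    rw [if_neg (by omega : ¬ i + 1 ≤ i)]
    refine ⟨hB'mem k h1 h2, ?_, ?_⟩
    · exact fun h hh => (hs2 k h1 h2).2.1 hh.1.1
    · exact fun h hh => hh.1.2
  · -- P3
    exact hP3
  · -- P4
    intro σ hσ hL k h1 h2 h hh
    have hp : (Gc xf' σ (i+1), Lc n σ (i+1)) ∈ D := ⟨σ, hσ, hL, rfl⟩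
    have := hh.2
    rw [Set.mem_iInter₂] at this
    exact this _ hp
  · -- xf extends
    exact hagree
  · -- bd extends
    intro t ht
    dsimp only
    rw [if_pos ht]

end Ctx

end GowersAux

namespace GowersAux

namespace Ctx

variable {n r : ℕ}

attribute [local instance] Classical.propDecidable

noncomputable def initSt (C : Ctx n r) : St := ⟨fun _ => zf, fun _ => 0, fun k => C.A1 k⟩

lemma good_init (C : Ctx n r) (hn : 1 ≤ n) : C.Good 0 C.initSt := by
  refine ⟨?_, ?_, ?_, ?_⟩
  · intro t ht; omega
  · intro k h1 h2
    exact ⟨C.A1_mem h1 h2, le_refl _, fun h _ t ht => absurd ht (Nat.not_lt_zero t)⟩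
  · intro σ hσ hL; rw [Lc_zero] at hL; omega
  · intro σ hσ hL; rw [Lc_zero] at hL; omega

noncomputable def chainSt (C : Ctx n r) (hn : 1 ≤ n) : ℕ → St
  | 0 => C.initSt
  | i+1 => if h : C.Good i (C.chainSt hn i) then Classical.choose (C.step_ex hn i _ h)
           else C.initSt

lemma chainSt_succ (C : Ctx n r) (hn : 1 ≤ n) (i : ℕ) :
    C.chainSt hn (i+1) = if h : C.Good i (C.chainSt hn i) then
      Classical.choose (C.step_ex hn i _ h) else C.initSt := rfl

lemma good_chain (C : Ctx n r) (hn : 1 ≤ n) : ∀ i, C.Good i (C.chainSt hn i) := by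
  intro i
  induction i with
  | zero => exact C.good_init hn
  | succ i ih =>
    rw [chainSt_succ, dif_pos ih]
    exact (Classical.choose_spec (C.step_ex hn i _ ih)).1

lemma chain_ext (C : Ctx n r) (hn : 1 ≤ n) (i : ℕ) :
    (∀ t, t < i → (C.chainSt hn (i+1)).xf t = (C.chainSt hn i).xf t) ∧
    (∀ t, t ≤ i → (C.chainSt hn (i+1)).bd t = (C.chainSt hn i).bd t) := by
  rw [chainSt_succ, dif_pos (C.good_chain hn i)]
  exact (Classical.choose_spec (C.step_ex hn i _ (C.good_chain hn i))).2

noncomputable def xfin (C : Ctx n r) (hn : 1 ≤ n) (t : ℕ) : Fn := (C.chainSt hn (t+1)).xf t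

noncomputable def bdfin (C : Ctx n r) (hn : 1 ≤ n) (t : ℕ) : ℕ := (C.chainSt hn t).bd t

lemma xf_agree (C : Ctx n r) (hn : 1 ≤ n) : ∀ i t, t < i →
    (C.chainSt hn i).xf t = C.xfin hn t := by
  intro i
  induction i with
  | zero => intro t ht; omega
  | succ i ih =>
    intro t ht
    rcases Nat.lt_or_ge t i with h | h
    · rw [(C.chain_ext hn i).1 t h]
      exact ih t h
    · have : t = i := by omega
      subst this
      rfl

lemma bd_agree (C : Ctx n r) (hn : 1 ≤ n) : ∀ i t, t ≤ i →
    (C.chainSt hn i).bd t = C.bdfin hn t := by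
  intro i
  induction i with
  | zero =>
    intro t ht
    have : t = 0 := by omega
    subst this; rfl
  | succ i ih =>
    intro t ht
    rcases Nat.lt_or_ge t (i+1) with h | h
    · rw [(C.chain_ext hn i).2 t (by omega)]
      exact ih t (by omega)
    · have : t = i + 1 := by omega
      subst this; rfl

lemma xfin_FK (C : Ctx n r) (hn : 1 ≤ n) (t : ℕ) : C.xfin hn t ∈ FK n :=
  ((C.good_chain hn (t+1)).1 t (by omega)).1

lemma xfin_Beyond (C : Ctx n r) (hn : 1 ≤ n) (t : ℕ) :
    C.xfin hn t ∈ Beyond (C.bdfin hn t) := by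
  have h := ((C.good_chain hn (t+1)).1 t (by omega)).2.1
  rwa [C.bd_agree hn (t+1) t (by omega)] at h

lemma xfin_bound (C : Ctx n r) (hn : 1 ≤ n) (t : ℕ) :
    ∀ u, C.bdfin hn (t+1) ≤ u → C.xfin hn t u = 0 := by
  have h := ((C.good_chain hn (t+1)).1 t (by omega)).2.2.1
  rwa [C.bd_agree hn (t+1) (t+1) (by omega)] at h

lemma bdfin_mono (C : Ctx n r) (hn : 1 ≤ n) : Monotone (C.bdfin hn) := by
  apply monotone_nat_of_le_succ
  intro t
  have h := ((C.good_chain hn (t+1)).1 t (by omega)).2.2.2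
  rwa [C.bd_agree hn (t+1) t (by omega), C.bd_agree hn (t+1) (t+1) (by omega)] at h

lemma xfin_combo (C : Ctx n r) (hn : 1 ≤ n) :
    ∀ σ i, Valid n σ → 1 ≤ Lc n σ i → Gc (C.xfin hn) σ i ∈ C.A1 (Lc n σ i) := by
  intro σ i hσ hL
  have h := (C.good_chain hn i).2.2.1 σ hσ hL
  rwa [Gc_congr (fun t ht => C.xf_agree hn i t ht)] at h

end Ctx

end GowersAux

namespace GowersAux

lemma color_exists {r : ℕ} (U : UF) (c : Fn → Fin r) (hr : 1 ≤ r) :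
    ∃ γ : Fin r, {f | c f = γ} ∈ U := by
  by_contra h
  push_neg at h
  have hc : ∀ γ : Fin r, {f | c f = γ}ᶜ ∈ U := fun γ =>
    Ultrafilter.compl_mem_iff_notMem.mpr (h γ)
  have : (⋂ γ : Fin r, {f | c f = γ}ᶜ) ∈ U := Filter.iInter_mem.mpr hc
  obtain ⟨f, hf⟩ := Ultrafilter.nonempty_of_mem this
  rw [Set.mem_iInter] at hf
  exact hf (c f) rfl

lemma FK_unique {j k : ℕ} {g : Fn} (hj : g ∈ FK j) (hk : g ∈ FK k) : j = k := by
  obtain ⟨_, hj2, tj, htj⟩ := hj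
  obtain ⟨_, hk2, tk, htk⟩ := hk
  have h1 := hk2 tj
  have h2 := hj2 tk
  omega

lemma sum_eq_sup {ι : Type*} (s : Finset ι) (v : ι → ℕ)
    (hv : ∀ a ∈ s, ∀ b ∈ s, a ≠ b → v a = 0 ∨ v b = 0) : ∑ a ∈ s, v a = s.sup v := by
  classical
  induction s using Finset.induction_on with
  | empty => simp
  | insert a s ha ih =>
    rw [Finset.sum_insert ha, Finset.sup_insert]
    have hsub : ∀ x ∈ s, ∀ y ∈ s, x ≠ y → v x = 0 ∨ v y = 0 := fun x hx y hy =>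
      hv x (Finset.mem_insert_of_mem hx) y (Finset.mem_insert_of_mem hy)
    rw [ih hsub]
    by_cases hva : v a = 0
    · omega
    · have hall : ∀ b ∈ s, v b = 0 := by
        intro b hb
        have hab : a ≠ b := fun hab => ha (hab ▸ hb)
        exact (hv a (Finset.mem_insert_self a s) b (Finset.mem_insert_of_mem hb) hab).resolve_left
          hva
      have hs0 : ∑ b ∈ s, v b = 0 := Finset.sum_eq_zero hall
      have hsup0 : s.sup v = 0 :=
        Nat.le_zero.mp (Finset.sup_le (fun b hb => le_of_eq (hall b hb)))
      rw [hs0] at *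
      omega

lemma tetris_iter_apply (m v : ℕ) : tetris^[m] v = v - m := by
  induction m generalizing v with
  | zero => simp
  | succ m ih =>
    rw [Function.iterate_succ_apply]
    show tetris^[m] (v - 1) = v - (m + 1)
    rw [ih]
    omega

end GowersAux

open GowersAux

/-- Gowers' `FIN_k` theorem: for every finite coloring of `FIN` and every `n`, there is
a sequence of elements of `FIN_n` with pairwise disjoint supports, all of whose tetris
combinations lying in `FIN_k` (for each `k ≤ n`) form a monochromatic set. -/
theorem gowers_FINk (n r : ℕ) (hr : 1 ≤ r) (c : (ℕ → ℕ) → Fin r) :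
    ∃ x : ℕ → ℕ → ℕ, (∀ i, IsFINk n (x i)) ∧
      (∀ i j, i ≠ j → Disjoint (Function.support (x i)) (Function.support (x j))) ∧
      ∀ k ≤ n, ∀ g ∈ {h | IsFINk k h} ∩ TetrisCombo x,
        ∀ g' ∈ {h | IsFINk k h} ∩ TetrisCombo x, c g = c g' := by
  classical
  rcases Nat.eq_zero_or_pos n with hn0 | hn
  · subst hn0
    have hsupp : Function.support (fun _ : ℕ => (0:ℕ)) = ∅ := by
      ext t; simp [Function.mem_support]
    refine ⟨fun _ _ => 0, ?_, ?_, ?_⟩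
    · intro i
      refine ⟨?_, fun _ => le_refl 0, ⟨0, rfl⟩⟩
      show (Function.support (fun _ : ℕ => (0:ℕ))).Finite
      rw [hsupp]; exact Set.finite_empty
    · intro i j _
      apply Set.disjoint_left.mpr
      intro u hu
      simp [Function.mem_support] at hu
    · intro k hk g hg g' hg'
      have hgz : g = g' := by
        funext u
        have h1 := hg.1.2.1 u
        have h2 := hg'.1.2.1 u
        omega
      rw [hgz]
  · obtain ⟨Uc, hUc0, hSS, hid, habs, hTT⟩ := GowersAux.exists_chain n
    have hcol : ∀ k, ∃ γ : Fin r, {f : Fn | c f = γ} ∈ Uc k := fun k =>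
      GowersAux.color_exists (Uc k) (fun f => c f) hr
    choose γ hγ using hcol
    set C : Ctx n r := ⟨fun f => c f, Uc, hSS, hid, habs, hTT, γ,
      fun k h1 h2 => Filter.inter_mem (hγ k) (hSS k h2).1⟩ with hC
    set x : ℕ → Fn := C.xfin hn with hx
    -- disjointness of supports
    have hkey : ∀ i j : ℕ, i < j → ∀ u, x i u ≠ 0 → x j u = 0 := by
      intro i j hij u hu
      have h1 : ¬ (C.bdfin hn (i+1) ≤ u) := fun hle => hu (C.xfin_bound hn i u hle)
      have h2 : u < C.bdfin hn j :=
        lt_of_lt_of_le (by omega) (C.bdfin_mono hn (show i+1 ≤ j by omega))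
      exact C.xfin_Beyond hn j u h2
    -- the bridging lemma
    have main : ∀ k, 1 ≤ k → k ≤ n → ∀ g : ℕ → ℕ, IsFINk k g →
        g ∈ TetrisCombo (fun i u => x i u) → c g = γ k := by
      intro k hk1 hk2 g hgk hgc
      obtain ⟨m, idx, its, hmono, hsum⟩ := hgc
      set i := idx (Fin.last m) + 1 with hi
      set σ : ℕ → Option ℕ := fun t =>
        if h : ∃ a, idx a = t then
          (if its (Classical.choose h) < n then some (its (Classical.choose h)) else none)
        else none with hσdef
      have hσval : Valid n σ := by
        intro t m0 hm0
        rw [hσdef] at hm0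
        dsimp only at hm0
        split at hm0
        · split at hm0
          · rename_i h1 h2
            cases hm0
            omega
          · exact absurd hm0 (by simp)
        · exact absurd hm0 (by simp)
      have hgeq : g = Gc x σ i := by
        funext u
        have hsum_u : g u = ∑ a : Fin (m+1), (x (idx a) u - its a) := by
          rw [hsum, Finset.sum_apply]
          congr 1
          funext a
          exact GowersAux.tetris_iter_apply _ _
        have hpair : ∀ a ∈ (Finset.univ : Finset (Fin (m+1))), ∀ b ∈ Finset.univ, a ≠ b →
            (x (idx a) u - its a) = 0 ∨ (x (idx b) u - its b) = 0 := by
          intro a _ b _ hab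
          have hne : idx a ≠ idx b := fun h => hab (hmono.injective h)
          rcases Nat.lt_or_ge (idx a) (idx b) with h | h
          · by_cases hz : x (idx a) u = 0
            · left; rw [hz]; omega
            · right; rw [hkey _ _ h u hz]; omega
          · have h' : idx b < idx a := by omega
            by_cases hz : x (idx b) u = 0
            · right; rw [hz]; omega
            · left; rw [hkey _ _ h' u hz]; omega
        have h1 : g u = Finset.univ.sup (fun a : Fin (m+1) => x (idx a) u - its a) :=
          hsum_u.trans (GowersAux.sum_eq_sup _ _ hpair)
        have h2 : Gc x σ i u =
            (Finset.range i).sup (fun t => (σ t).elim 0 (fun m0 => x t u - m0)) :=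
          Gc_sup x σ i u
        rw [h1, h2]
        apply le_antisymm
        · apply Finset.sup_le
          intro a _
          rcases Nat.lt_or_ge (its a) n with hits | hits
          · have hex : ∃ a', idx a' = idx a := ⟨a, rfl⟩
            have hch : Classical.choose hex = a := hmono.injective (Classical.choose_spec hex)
            have hσa : σ (idx a) = some (its a) := by
              rw [hσdef]
              dsimp only
              rw [dif_pos hex, hch, if_pos hits]
            have hmem : idx a ∈ Finset.range i := by
              rw [Finset.mem_range, hi]
              have := hmono.monotone (Fin.le_last a)
              omega
            have hle := Finset.le_sup (f := fun t => (σ t).elim 0 (fun m0 => x t u - m0)) hmem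
            replace hle : (σ (idx a)).elim 0 (fun m0 => x (idx a) u - m0) ≤ _ := hle
            rw [hσa] at hle
            exact hle
          · have hle : x (idx a) u ≤ n := (C.xfin_FK hn (idx a)).2.1 u
            have : x (idx a) u - its a = 0 := by omega
            rw [this]
            exact Nat.zero_le _
        · apply Finset.sup_le
          intro t _
          rcases hσt : σ t with _ | m0
          · exact Nat.zero_le _
          · rw [hσdef] at hσt
            dsimp only at hσt
            split at hσt
            · rename_i hex
              split at hσt
              · rename_i hlt
                cases hσt
                have hidx : idx (Classical.choose hex) = t := Classical.choose_spec hex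
                have hle := Finset.le_sup (f := fun a : Fin (m+1) => x (idx a) u - its a)
                  (Finset.mem_univ (Classical.choose hex))
                replace hle : x (idx (Classical.choose hex)) u - its (Classical.choose hex) ≤ _ := hle
                rw [hidx] at hle
                exact hle
              · exact absurd hσt (by simp)
            · exact absurd hσt (by simp)
      rcases Nat.lt_or_ge (Lc n σ i) 1 with hL | hL
      · exfalso
        have hz : Gc x σ i = zf := Lc_zero_G hσval (by omega)
        obtain ⟨t0, ht0⟩ := hgk.2.2
        rw [hgeq, hz] at ht0
        exact absurd (show (0:ℕ) = k from ht0) (by omega)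
      · have hmem := C.xfin_combo hn σ i hσval hL
        have hA := C.A1_subset _ hmem
        have hFKL : Gc x σ i ∈ FK (Lc n σ i) := hA.2
        have hgFK : g ∈ FK k := hgk
        rw [hgeq] at hgFK
        have hLk : Lc n σ i = k := GowersAux.FK_unique hFKL hgFK
        have hcol : C.c (Gc x σ i) = C.gam (Lc n σ i) := hA.1
        rw [hLk] at hcol
        rw [hgeq]
        exact hcol
    refine ⟨fun i u => x i u, ?_, ?_, ?_⟩
    · intro i
      exact C.xfin_FK hn i
    · intro i j hij
      have key : ∀ i j : ℕ, i < j →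
          Disjoint (Function.support (fun u => x i u)) (Function.support (fun u => x j u)) := by
        intro i j h
        rw [Set.disjoint_left]
        intro u hu h'u
        exact h'u (hkey i j h u hu)
      rcases Nat.lt_or_ge i j with h | h
      · exact key i j h
      · exact (key j i (by omega)).symm
    · intro k hk g hg g' hg'
      rcases Nat.eq_zero_or_pos k with hk0 | hk1
      · subst hk0
        have hgz : g = g' := by
          funext u
          have h1 := hg.1.2.1 u
          have h2 := hg'.1.2.1 u
          omega
        rw [hgz]
      · rw [main k hk1 hk g hg.1 hg.2, main k hk1 hk g' hg'.1 hg'.2]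
end

section
/- (Hindman's finite unions theorem.) For every r ≥ 1 and every coloring c of the collection of nonempty finite subsets of ℕ with r colors, there exists a sequence (A_i)_{i≥1} of pairwise disjoint nonempty finite subsets of ℕ such that the set { A_{n_1} ∪ A_{n_2} ∪ ⋯ ∪ A_{n_ℓ} : ℓ ≥ 1, n_1 < n_2 < ⋯ < n_ℓ } of all finite unions of members of the sequence is c-monochromatic (c is constant on it). -/
namespace HFU
open Hindman

def bits (n : ℕ) : Finset ℕ := (Finset.range n).filter (fun i => n.testBit i)

lemma mem_bits {n i : ℕ} : i ∈ bits n ↔ n.testBit i = true := by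
  constructor
  · intro h; exact (Finset.mem_filter.mp h).2
  · intro h
    refine Finset.mem_filter.mpr ⟨Finset.mem_range.mpr ?_, h⟩
    exact lt_of_lt_of_le (Nat.lt_two_pow_self (n := i)) (Nat.ge_two_pow_of_testBit h)

lemma bits_nonempty {n : ℕ} (hn : 0 < n) : (bits n).Nonempty := by
  by_contra h
  rw [Finset.not_nonempty_iff_eq_empty] at h
  have : n = 0 := by
    apply Nat.zero_of_testBit_eq_false
    intro i
    by_contra hb
    have : i ∈ bits n := mem_bits.mpr (by simpa using hb)
    simp [h] at this
  omega

lemma testBit_of_dvd_ge {y m i : ℕ} (hy : 2 ^ m ∣ y) (h : y.testBit i = true) : m ≤ i := by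
  obtain ⟨a, rfl⟩ := hy
  rw [Nat.testBit_two_pow_mul] at h
  simpa using (Bool.and_eq_true_iff.mp h).1

lemma bits_disj {x y m : ℕ} (hx : x < 2 ^ m) (hy : 2 ^ m ∣ y) :
    Disjoint (bits x) (bits y) := by
  rw [Finset.disjoint_left]
  intro i hix hiy
  have h1 : m ≤ i := testBit_of_dvd_ge hy (mem_bits.mp hiy)
  have h2 : x.testBit i = true := mem_bits.mp hix
  have := Nat.ge_two_pow_of_testBit h2
  have : 2 ^ m ≤ 2 ^ i := Nat.pow_le_pow_right (by norm_num) h1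
  omega

lemma bits_add {x y m : ℕ} (hx : x < 2 ^ m) (hy : 2 ^ m ∣ y) :
    bits (x + y) = bits x ∪ bits y := by
  obtain ⟨a, rfl⟩ := hy
  ext i
  simp only [Finset.mem_union, mem_bits]
  rw [add_comm, Nat.testBit_two_pow_mul_add a hx i, Nat.testBit_two_pow_mul]
  by_cases h : i < m
  · simp [h, Nat.not_le_of_lt h]
  · push_neg at h
    have hxi : x.testBit i = false :=
      Nat.testBit_lt_two_pow (lt_of_lt_of_le hx (Nat.pow_le_pow_right (by norm_num) h))
    simp [h, Nat.not_lt_of_le h, hxi]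



variable (b : Stream' ℕ)

def P (n k : ℕ) : ℕ := ∑ i ∈ Finset.range k, b (n + i)

lemma P_succ (n k : ℕ) : P b n (k + 1) = b n + P b (n + 1) k := by
  simp only [P, Finset.sum_range_succ', add_zero]
  rw [add_comm]
  congr 1
  apply Finset.sum_congr rfl
  intro i _
  congr 1
  omega

lemma P_one (n : ℕ) : P b n 1 = b n := by simp [P]

lemma P_add (n k l : ℕ) : P b n (k + l) = P b n k + P b (n + k) l := by
  induction k generalizing n with
  | zero => simp [P]
  | succ k ih =>
    rw [Nat.succ_add, P_succ, P_succ, ih (n+1), ← add_assoc]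
    congr 2
    omega

lemma drop_tail (n : ℕ) : (b.drop n).tail = b.drop (n + 1) := by
  rw [Stream'.tail_eq_drop, Stream'.drop_drop, Nat.add_comm]

lemma head_drop' (n : ℕ) : (b.drop n).head = b n := Stream'.head_drop ..

lemma P_mem_FS (n : ℕ) : ∀ k, 0 < k → P b n k ∈ FS (b.drop n) := by
  intro k
  induction k generalizing n with
  | zero => omega
  | succ k ih =>
    intro _
    rcases Nat.eq_zero_or_pos k with hk | hk
    · subst hk
      rw [P_one]
      have := FS.head (b.drop n)
      rwa [head_drop'] at this
    · rw [P_succ, ← head_drop' b n]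
      refine FS.cons _ _ ?_
      rw [drop_tail]
      exact ih (n+1) hk

lemma P_add_FS (n : ℕ) : ∀ k, 0 < k → ∀ z, z ∈ FS (b.drop (n + k)) →
    P b n k + z ∈ FS (b.drop n) := by
  intro k
  induction k generalizing n with
  | zero => omega
  | succ k ih =>
    intro _ z hz
    rcases Nat.eq_zero_or_pos k with hk | hk
    · subst hk
      rw [P_one, ← head_drop' b n]
      exact FS.cons _ _ (by rwa [drop_tail])
    · rw [P_succ, add_assoc, ← head_drop' b n]
      refine FS.cons (b.drop n) _ ?_
      rw [drop_tail]
      exact ih (n+1) hk z (by rwa [show n + 1 + k = n + (k+1) by ring])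

lemma FS_drop_mono {n m : ℕ} (h : n ≤ m) : FS (b.drop m) ⊆ FS (b.drop n) := by
  have : b.drop m = (b.drop n).drop (m - n) := by
    rw [Stream'.drop_drop, Nat.add_sub_cancel' h]
  rw [this]
  exact FS_iter_tail_sub_FS _ _

lemma exists_block (n m : ℕ) : ∃ p : ℕ × ℕ, n ≤ p.1 ∧ 0 < p.2 ∧ 2 ^ m ∣ P b p.1 p.2 := by
  have hcard : (Finset.range (2 ^ m)).card < (Finset.range (2 ^ m + 1)).card := by
    simp
  have hmaps : ∀ k ∈ Finset.range (2 ^ m + 1), P b n k % 2 ^ m ∈ Finset.range (2 ^ m) := by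
    intro k _
    exact Finset.mem_range.mpr (Nat.mod_lt _ (Nat.two_pow_pos m))
  obtain ⟨k1, hk1, k2, hk2, hne, heq⟩ :=
    Finset.exists_ne_map_eq_of_card_lt_of_maps_to hcard hmaps
  wlog hlt : k1 < k2 generalizing k1 k2
  · exact this k2 hk2 k1 hk1 hne.symm heq.symm (by omega)
  refine ⟨(n + k1, k2 - k1), by omega, by omega, ?_⟩
  have hsplit : P b n k2 = P b n k1 + P b (n + k1) (k2 - k1) := by
    rw [← P_add]; congr 1; omega
  have hmod : P b n k1 + P b (n + k1) (k2 - k1) ≡ P b n k1 + 0 [MOD 2 ^ m] := by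
    rw [add_zero, ← hsplit]
    exact heq.symm
  have := Nat.ModEq.add_left_cancel (Nat.ModEq.refl (P b n k1)) hmod
  exact (Nat.modEq_zero_iff_dvd).mp this

lemma FS_pos : ∀ (a : Stream' ℕ) (x : ℕ), x ∈ FS a → (∀ i, 0 < a i) → 0 < x := by
  intro a x hx
  induction hx with
  | head' a => exact fun h => h 0
  | tail' a m _ ih => exact fun h => ih (fun i => h (i + 1))
  | cons' a m _ ih =>
    intro h
    have : 0 < a.head := h 0
    omega

lemma mem_FS_self (n : ℕ) : b n ∈ FS b := by
  have := FS.head (b.drop n)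
  rw [head_drop'] at this
  exact FS_iter_tail_sub_FS _ _ this


noncomputable def pick (n m : ℕ) : ℕ × ℕ := (exists_block b n m).choose

lemma pick_spec (n m : ℕ) : n ≤ (pick b n m).1 ∧ 0 < (pick b n m).2 ∧
    2 ^ m ∣ P b (pick b n m).1 (pick b n m).2 := (exists_block b n m).choose_spec

noncomputable def state : ℕ → ℕ × ℕ
  | 0 => (0, 0)
  | k + 1 =>
    let q := state k
    let p := pick b q.1 q.2
    (p.1 + p.2, q.2 + P b p.1 p.2)

noncomputable def N (k : ℕ) : ℕ := (state b k).1
noncomputable def S (k : ℕ) : ℕ := (state b k).2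
noncomputable def blk (k : ℕ) : ℕ × ℕ := pick b (N b k) (S b k)
noncomputable def y (k : ℕ) : ℕ := P b (blk b k).1 (blk b k).2

lemma N_succ (k : ℕ) : N b (k + 1) = (blk b k).1 + (blk b k).2 := rfl
lemma S_succ (k : ℕ) : S b (k + 1) = S b k + y b k := rfl
lemma N_le_blk (k : ℕ) : N b k ≤ (blk b k).1 := (pick_spec b _ _).1
lemma blk_pos (k : ℕ) : 0 < (blk b k).2 := (pick_spec b _ _).2.1
lemma y_dvd (k : ℕ) : 2 ^ S b k ∣ y b k := (pick_spec b _ _).2.2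

lemma N_mono : Monotone (N b) := by
  apply monotone_nat_of_le_succ
  intro k
  calc N b k ≤ (blk b k).1 := N_le_blk b k
    _ ≤ (blk b k).1 + (blk b k).2 := Nat.le_add_right _ _
    _ = N b (k + 1) := (N_succ b k).symm

lemma S_eq (k : ℕ) : S b k = ∑ j ∈ Finset.range k, y b j := by
  induction k with
  | zero => rfl
  | succ k ih => rw [Finset.sum_range_succ, ← ih, S_succ]

lemma y_pos (hb : ∀ i, 0 < b i) (k : ℕ) : 0 < y b k := by
  have h := blk_pos b k
  have : y b k ∈ FS (b.drop (blk b k).1) := P_mem_FS b _ _ h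
  exact FS_pos _ _ (FS_iter_tail_sub_FS _ _ this) hb

lemma y_le_S {j k : ℕ} (h : j < k) : y b j ≤ S b k := by
  rw [S_eq]
  exact Finset.single_le_sum (fun i _ => Nat.zero_le _) (Finset.mem_range.mpr h)

lemma y_bits_disj {i j : ℕ} (h : i < j) : Disjoint (bits (y b i)) (bits (y b j)) := by
  refine bits_disj (lt_of_le_of_lt (y_le_S b h) Nat.lt_two_pow_self) (y_dvd b j)

lemma sum_bits : ∀ (q : ℕ) (t : Finset ℕ), t.card = q →
    bits (∑ j ∈ t, y b j) = t.biUnion (fun j => bits (y b j)) := by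
  intro q
  induction q with
  | zero =>
    intro t ht
    rw [Finset.card_eq_zero] at ht
    subst ht
    simp [bits]
  | succ q ih =>
    intro t ht
    have hne : t.Nonempty := Finset.card_pos.mp (by omega)
    set i := t.max' hne with hi
    have hmem : i ∈ t := t.max'_mem hne
    have hsub : t.erase i ⊆ Finset.range i := by
      intro j hj
      have := Finset.le_max' t j (Finset.mem_of_mem_erase hj)
      have := Finset.ne_of_mem_erase hj
      rw [Finset.mem_range]
      omega
    have hle : ∑ j ∈ t.erase i, y b j ≤ S b i := by
      rw [S_eq]
      exact Finset.sum_le_sum_of_subset hsub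
    have hsum : ∑ j ∈ t, y b j = (∑ j ∈ t.erase i, y b j) + y b i := by
      rw [Finset.sum_erase_add _ _ hmem]
    rw [hsum, bits_add (lt_of_le_of_lt hle Nat.lt_two_pow_self) (y_dvd b i),
      ih (t.erase i) (by rw [Finset.card_erase_of_mem hmem]; omega)]
    conv_rhs => rw [← Finset.insert_erase hmem]
    rw [Finset.biUnion_insert]
    exact Finset.union_comm _ _

lemma sum_mem_FS : ∀ (q : ℕ) (t : Finset ℕ), t.card = q + 1 →
    ∀ k, (∀ j ∈ t, k ≤ j) → ∑ j ∈ t, y b j ∈ FS (b.drop (N b k)) := by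
  intro q
  induction q with
  | zero =>
    intro t ht k hk
    obtain ⟨i, rfl⟩ := Finset.card_eq_one.mp ht
    rw [Finset.sum_singleton]
    have h1 : N b k ≤ (blk b i).1 :=
      le_trans (N_mono b (hk i (Finset.mem_singleton_self i))) (N_le_blk b i)
    exact FS_drop_mono b h1 (P_mem_FS b _ _ (blk_pos b i))
  | succ q ih =>
    intro t ht k hk
    have hne : t.Nonempty := Finset.card_pos.mp (by omega)
    set i := t.min' hne with hi
    have hmem : i ∈ t := t.min'_mem hne
    have hik : k ≤ i := hk i hmem
    have hcard : (t.erase i).card = q + 1 := by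
      rw [Finset.card_erase_of_mem hmem]; omega
    have herase : ∀ j ∈ t.erase i, i + 1 ≤ j := by
      intro j hj
      have := t.min'_le j (Finset.mem_of_mem_erase hj)
      have := Finset.ne_of_mem_erase hj
      omega
    have hz := ih (t.erase i) hcard (i + 1) herase
    have hsum : ∑ j ∈ t, y b j = y b i + ∑ j ∈ t.erase i, y b j :=
      (Finset.add_sum_erase _ _ hmem).symm
    rw [hsum]
    have h1 : N b k ≤ (blk b i).1 := le_trans (N_mono b hik) (N_le_blk b i)
    refine FS_drop_mono b h1 ?_
    refine P_add_FS b _ _ (blk_pos b i) _ ?_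
    rw [← N_succ]
    exact hz

end HFU


open HFU in
/-- Hindman's finite unions theorem: for every finite coloring of the nonempty finite
subsets of `ℕ` there is a sequence of pairwise disjoint nonempty finite sets all of
whose finite unions receive the same color. -/
theorem hindman_finite_unions (r : ℕ) (hr : 1 ≤ r) (c : Finset ℕ → Fin r) :
    ∃ A : ℕ → Finset ℕ, (∀ i, (A i).Nonempty) ∧
      (∀ i j, i ≠ j → Disjoint (A i) (A j)) ∧
      ∀ B ∈ {B : Finset ℕ | ∃ t : Finset ℕ, t.Nonempty ∧ B = t.biUnion A},
        ∀ C ∈ {B : Finset ℕ | ∃ t : Finset ℕ, t.Nonempty ∧ B = t.biUnion A},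
          c B = c C := by
  classical
  set a : Stream' ℕ := fun i => 2 ^ i with ha
  set s : Set (Set ℕ) := Set.range (fun k : Fin r => {n : ℕ | 0 < n ∧ c (bits n) = k}) with hs
  have sfin : s.Finite := Set.finite_range _
  have scov : Hindman.FS a ⊆ ⋃₀ s := by
    intro x hx
    have hxpos : 0 < x := FS_pos a x hx (fun i => Nat.two_pow_pos i)
    exact ⟨{n | 0 < n ∧ c (bits n) = c (bits x)}, ⟨c (bits x), rfl⟩, hxpos, rfl⟩
  obtain ⟨C, hC, b, hbC⟩ := Hindman.FS_partition_regular a s sfin scov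
  obtain ⟨k₀, rfl⟩ := hC
  have hb : ∀ i, 0 < b i := fun i => (hbC (mem_FS_self b i)).1
  refine ⟨fun j => bits (y b j), ?_, ?_, ?_⟩
  · intro j
    exact bits_nonempty (y_pos b hb j)
  · intro i j hij
    rcases Nat.lt_or_ge i j with h | h
    · exact y_bits_disj b h
    · exact (y_bits_disj b (by omega)).symm
  · have key : ∀ v : Finset ℕ, v.Nonempty →
        c (v.biUnion (fun j => bits (y b j))) = k₀ := by
      intro v hv
      rw [← sum_bits b v.card v rfl]
      have hcard : v.card = (v.card - 1) + 1 := by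
        have := Finset.card_pos.mpr hv
        omega
      have hmem := sum_mem_FS b (v.card - 1) v hcard 0 (fun j _ => Nat.zero_le j)
      have hN0 : N b 0 = 0 := rfl
      rw [hN0, Stream'.drop_zero] at hmem
      exact (hbC hmem).2
    rintro B ⟨t, htne, rfl⟩ C' ⟨u, hune, rfl⟩
    rw [key t htne, key u hune]
end

section
/- Let A be a nonempty finite alphabet, let W_0 be the set of nonempty finite words over A, let W_1 be the set of nonempty finite words over A ∪ {x} in which the variable x occurs, and let T = W_0 ∪ W_1, a semigroup under concatenation. For a ∈ A and u ∈ T, let u[a] denote the word obtained from u by replacing every occurrence of x by a. Then there exist ultrafilters ν and ω on T with W_0 ∈ ν and W_1 ∈ ω such that ν·ν = ν, ω·ω = ω, ω·ν = ν·ω = ω, and Ultrafilter.map (u ↦ u[a]) ω = ν for every a ∈ A. -/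
/-- Words over `A ∪ {x}` are lists of `Option A`, with `none` playing the role of the
variable `x`. `W₀` is the set of nonempty words over `A` (no occurrence of `x`). -/
def HJW0 (A : Type*) : Set (List (Option A)) := { w | w ≠ [] ∧ ¬ (none ∈ w) }

/-- `W₁` is the set of nonempty words over `A ∪ {x}` in which the variable `x`
(encoded as `none`) occurs. -/
def HJW1 (A : Type*) : Set (List (Option A)) := { w | w ≠ [] ∧ none ∈ w }

/-- Substitution of the letter `a` for the variable `x` in a word. -/
def HJsubst {A : Type*} (a : A) (w : List (Option A)) : List (Option A) :=
  w.map fun o => some (o.getD a)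

/-- The product of two ultrafilters with respect to a binary operation `op`:
`B ∈ uProd op U V ↔ {s | {t | op s t ∈ B} ∈ V} ∈ U`. -/
def uProd {S : Type*} (op : S → S → S) (U V : Ultrafilter S) : Ultrafilter S :=
  U.bind fun s => V.map (op s)

namespace HJaux

instance listSG (α : Type*) : Semigroup (List α) where
  mul := (· ++ ·)
  mul_assoc := List.append_assoc

attribute [local instance] Ultrafilter.semigroup Ultrafilter.mul

variable {A : Type*}

lemma mem_mul {M : Type*} [Semigroup M] {U V : Ultrafilter M} {s : Set M} :
    s ∈ U * V ↔ {x | {y | x * y ∈ s} ∈ V} ∈ U := Iff.rfl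

lemma uProd_eq {α : Type*} (U V : Ultrafilter (List α)) :
    uProd (· ++ ·) U V = U * V := by ext s; rw [mem_mul]; rfl

lemma subst_append (a : A) (x y : List (Option A)) :
    HJsubst a (x * y) = HJsubst a x * HJsubst a y := List.map_append

lemma subst_subst (a b : A) (w : List (Option A)) :
    HJsubst a (HJsubst b w) = HJsubst b w := by
  simp [HJsubst, List.map_map, Function.comp_def]

lemma subst_mem_W0 {a : A} {w : List (Option A)} (hw : w ∈ HJW1 A) :
    HJsubst a w ∈ HJW0 A := by
  refine ⟨by simpa [HJsubst] using hw.1, ?_⟩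
  simp [HJsubst]

lemma W1_mul_right {x y : List (Option A)} (hy : y ∈ HJW1 A) : x * y ∈ HJW1 A :=
  ⟨List.append_ne_nil_of_right_ne_nil x hy.1, List.mem_append.2 (Or.inr hy.2)⟩

lemma W1_mul_left {x y : List (Option A)} (hx : x ∈ HJW1 A) : x * y ∈ HJW1 A :=
  ⟨List.append_ne_nil_of_left_ne_nil hx.1 y, List.mem_append.2 (Or.inl hx.2)⟩

lemma W1_mem_mul_right {U V : Ultrafilter (List (Option A))} (h : HJW1 A ∈ V) :
    HJW1 A ∈ U * V := by
  rw [mem_mul]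
  refine Filter.univ_mem' fun x => ?_
  exact Filter.mem_of_superset h fun y hy => W1_mul_right hy

lemma W1_mem_mul_left {U V : Ultrafilter (List (Option A))} (h : HJW1 A ∈ U) :
    HJW1 A ∈ U * V := by
  rw [mem_mul]
  refine Filter.mem_of_superset h fun x hx => ?_
  exact Filter.univ_mem' fun y => W1_mul_left hx

lemma map_subst_mul (a : A) (U V : Ultrafilter (List (Option A))) :
    (U * V).map (HJsubst a) = U.map (HJsubst a) * V.map (HJsubst a) := by
  ext s
  rw [mem_mul, Ultrafilter.mem_map, mem_mul, Ultrafilter.mem_map]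
  have hset : HJsubst a ⁻¹' {x | {y | x * y ∈ s} ∈ V.map (HJsubst a)}
      = {x | {y | x * y ∈ HJsubst a ⁻¹' s} ∈ V} := by
    ext x
    simp only [Set.mem_preimage, Set.mem_setOf_eq, Ultrafilter.mem_map]
    have h2 : HJsubst a ⁻¹' {y | HJsubst a x * y ∈ s} = {y | x * y ∈ HJsubst a ⁻¹' s} := by
      ext y; simp [Set.mem_preimage, subst_append]
    rw [h2]; exact Iff.rfl
  rw [hset]

lemma continuous_umap {α : Type*} (f : α → α) :
    Continuous (Ultrafilter.map f : Ultrafilter α → Ultrafilter α) :=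
  ultrafilterBasis_is_basis.continuous_iff.2 <| Set.forall_mem_range.mpr fun s => by
    have : (Ultrafilter.map f : Ultrafilter α → Ultrafilter α) ⁻¹' {u | s ∈ u}
        = {u | f ⁻¹' s ∈ u} := by
      ext u; simp [Ultrafilter.mem_map]
    rw [this]
    exact ultrafilter_isOpen_basic _

/-- `HJRich B` means `B` contains a combinatorial line `{w[a] : a ∈ A}` for some
variable word `w`. -/
def HJRich (A : Type*) (B : Set (List (Option A))) : Prop :=
  ∃ w ∈ HJW1 A, ∀ a : A, HJsubst a w ∈ B

lemma hj_cover {A : Type*} [Fintype A] [Nonempty A] {κ : Type*} [Finite κ]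
    (Bs : κ → Set (List (Option A))) (hcov : HJW0 A ⊆ ⋃ i, Bs i) :
    ∃ i, HJRich A (Bs i) := by
  classical
  obtain ⟨a₀⟩ := ‹Nonempty A›
  have hW : ([some a₀] : List (Option A)) ∈ HJW0 A := ⟨List.cons_ne_nil _ _, by simp⟩
  have hκ : Nonempty κ := by
    rcases Set.mem_iUnion.1 (hcov hW) with ⟨i, -⟩; exact ⟨i⟩
  obtain ⟨ι, ιfin, hι⟩ := Combinatorics.Line.exists_mono_in_high_dimension A κ
  letI := ιfin
  set e := Fintype.equivFin ι with he
  set wd : (ι → Option A) → List (Option A) :=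
    fun g => List.ofFn fun j => g (e.symm j) with hwd
  set C : (ι → A) → κ := fun v =>
    if h : ∃ i, wd (fun t => some (v t)) ∈ Bs i then h.choose else Classical.arbitrary κ
    with hC
  obtain ⟨l, i₀, hmono⟩ := hι C
  haveI hne : Nonempty ι := ⟨l.proper.choose⟩
  have hnil : ∀ g : ι → Option A, wd g ≠ [] := by
    intro g h
    have := congrArg List.length h
    simp only [hwd, List.length_ofFn, List.length_nil] at this
    exact Fintype.card_ne_zero this
  have hsub : ∀ a : A, HJsubst a (wd l.idxFun) = wd fun t => some (l a t) := by
    intro a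
    simp only [hwd, HJsubst, List.map_ofFn]
    rfl
  have hmem : ∀ a : A, ∃ i, wd (fun t => some (l a t)) ∈ Bs i := by
    intro a
    apply Set.mem_iUnion.1
    apply hcov
    refine ⟨hnil (fun t => some (l a t)), ?_⟩
    intro hcontra
    rcases List.mem_ofFn.1 hcontra with ⟨j, hj⟩
    simp at hj
  refine ⟨i₀, wd l.idxFun, ⟨hnil _, ?_⟩, fun a => ?_⟩
  · rcases l.proper with ⟨t, ht⟩
    exact List.mem_ofFn.2 ⟨e t, by simp [ht]⟩
  · have h1 : C (l a) = (hmem a).choose := dif_pos (hmem a)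
    have h3 : (hmem a).choose = i₀ := by rw [← h1]; exact hmono a
    rw [hsub a, ← h3]
    exact (hmem a).choose_spec

lemma exists_rich_ultrafilter (A : Type*) [Fintype A] [Nonempty A] :
    ∃ p : Ultrafilter (List (Option A)), HJW0 A ∈ p ∧ ∀ B ∈ p, HJRich A B := by
  classical
  set 𝒢 : Set (Set (List (Option A))) := {s | ¬ HJRich A sᶜ} with h𝒢
  have hW0 : HJW0 A ∈ 𝒢 := by
    rintro ⟨w, hw, hsub⟩
    exact (hsub (Classical.arbitrary A)) (subst_mem_W0 hw)
  have hne : Filter.NeBot (Filter.generate 𝒢) := by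
    rw [Filter.generate_neBot_iff]
    intro t ht htfin
    by_contra hemp
    rw [Set.not_nonempty_iff_eq_empty] at hemp
    haveI : Finite ↥t := htfin.to_subtype
    have hcov : HJW0 A ⊆ ⋃ s : ↥t, (↑s : Set (List (Option A)))ᶜ := by
      intro x _
      have hx : x ∉ ⋂₀ t := by rw [hemp]; exact Set.notMem_empty x
      have : ∃ s ∈ t, x ∉ s := by
        by_contra h
        push_neg at h
        exact hx fun s hs => h s hs
      rcases this with ⟨s, hs, hxs⟩
      exact Set.mem_iUnion.2 ⟨⟨s, hs⟩, hxs⟩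
    obtain ⟨⟨s, hs⟩, hrich⟩ := hj_cover (fun s : ↥t => (↑s : Set (List (Option A)))ᶜ) hcov
    exact (ht hs) hrich
  obtain ⟨p, hp⟩ := Ultrafilter.exists_le (Filter.generate 𝒢)
  refine ⟨p, hp (Filter.mem_generate_of_mem hW0), fun B hB => ?_⟩
  by_contra hrich
  have : Bᶜ ∈ 𝒢 := by simpa [h𝒢] using hrich
  have hBc : Bᶜ ∈ p := hp (Filter.mem_generate_of_mem this)
  exact (Ultrafilter.compl_mem_iff_notMem.1 hBc) hB

lemma exists_symmetric_ultrafilter (A : Type*) [Fintype A] [Nonempty A]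
    {p : Ultrafilter (List (Option A))} (hp : ∀ B ∈ p, HJRich A B) :
    ∃ q : Ultrafilter (List (Option A)),
      HJW1 A ∈ q ∧ ∀ a : A, q.map (HJsubst a) = p := by
  classical
  set 𝒢 : Set (Set (List (Option A))) :=
    insert (HJW1 A) {s | ∃ (a : A) (B : Set (List (Option A))), B ∈ p ∧ s = HJsubst a ⁻¹' B}
    with h𝒢
  have key : ∀ t : Set (Set (List (Option A))), t.Finite → t ⊆ 𝒢 →
      ∃ B ∈ p, (HJW1 A ∩ ⋂ a : A, HJsubst a ⁻¹' B) ⊆ ⋂₀ t := by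
    intro t htfin
    refine Set.Finite.induction_on (motive := fun t _ => t ⊆ 𝒢 →
        ∃ B ∈ p, (HJW1 A ∩ ⋂ a : A, HJsubst a ⁻¹' B) ⊆ ⋂₀ t) t htfin ?_ ?_
    · intro _
      exact ⟨Set.univ, Filter.univ_mem, by simp⟩
    · intro s t hst htfin2 ih hsub
      obtain ⟨B, hB, hBsub⟩ := ih fun u hu => hsub (Set.mem_insert_of_mem _ hu)
      rcases hsub (Set.mem_insert _ _) with hs | ⟨a, B', hB', rfl⟩
      · refine ⟨B, hB, fun x hx => ?_⟩
        rw [Set.sInter_insert]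
        exact ⟨hs ▸ hx.1, hBsub hx⟩
      · refine ⟨B ∩ B', Filter.inter_mem hB hB', fun x hx => ?_⟩
        rw [Set.sInter_insert]
        have hxa : ∀ c : A, HJsubst c x ∈ B ∩ B' := fun c =>
          Set.mem_iInter.1 hx.2 c
        constructor
        · exact (hxa a).2
        · exact hBsub ⟨hx.1, Set.mem_iInter.2 fun c => (hxa c).1⟩
  have hne : Filter.NeBot (Filter.generate 𝒢) := by
    rw [Filter.generate_neBot_iff]
    intro t ht htfin
    obtain ⟨B, hB, hBsub⟩ := key t htfin ht
    obtain ⟨w, hw, hsubw⟩ := hp B hB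
    exact ⟨w, hBsub ⟨hw, Set.mem_iInter.2 hsubw⟩⟩
  obtain ⟨q, hq⟩ := Ultrafilter.exists_le (Filter.generate 𝒢)
  refine ⟨q, hq (Filter.mem_generate_of_mem (Set.mem_insert _ _)), fun a => ?_⟩
  have hle : (↑(q.map (HJsubst a)) : Filter (List (Option A))) ≤ ↑p := by
    intro B hB
    have : HJsubst a ⁻¹' B ∈ 𝒢 := Set.mem_insert_of_mem _ ⟨a, B, hB, rfl⟩
    exact hq (Filter.mem_generate_of_mem this)
  exact Ultrafilter.coe_le_coe.1 hle

theorem main (A : Type*) [Fintype A] [Nonempty A] :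
    ∃ ν ω : Ultrafilter (List (Option A)),
      HJW0 A ∈ ν ∧ HJW1 A ∈ ω ∧
      uProd (· ++ ·) ν ν = ν ∧
      uProd (· ++ ·) ω ω = ω ∧
      uProd (· ++ ·) ω ν = ω ∧
      uProd (· ++ ·) ν ω = ω ∧
      ∀ a : A, Ultrafilter.map (HJsubst a) ω = ν := by
  classical
  obtain ⟨p, hpW0, hp⟩ := exists_rich_ultrafilter A
  obtain ⟨q, hqW1, hq⟩ := exists_symmetric_ultrafilter A hp
  set a₀ := Classical.arbitrary A with ha₀
  -- the compact subsemigroup of ultrafilters on `W₁` with all substitutions equal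
  set C : Set (Ultrafilter (List (Option A))) :=
    {u | HJW1 A ∈ u ∧ ∀ a : A, u.map (HJsubst a) = u.map (HJsubst a₀)} with hC
  have hCclosed : IsClosed C := by
    have : C = {u : Ultrafilter (List (Option A)) | HJW1 A ∈ u} ∩
        ⋂ a : A, {u | u.map (HJsubst a) = u.map (HJsubst a₀)} := by
      ext u; simp [hC, Set.mem_iInter]
    rw [this]
    exact (ultrafilter_isClosed_basic _).inter
      (isClosed_iInter fun a =>
        isClosed_eq (continuous_umap _) (continuous_umap _))
  have hCmul : ∀ u ∈ C, ∀ v ∈ C, u * v ∈ C := by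
    rintro u ⟨hu1, hu2⟩ v ⟨hv1, hv2⟩
    exact ⟨W1_mem_mul_right hv1, fun a => by
      rw [map_subst_mul, map_subst_mul, hu2 a, hv2 a]⟩
  have hCne : C.Nonempty := ⟨q, hqW1, fun a => by rw [hq a, hq a₀]⟩
  obtain ⟨ω₀, hω₀C, hω₀idem⟩ :=
    exists_idempotent_in_compact_subsemigroup Ultrafilter.continuous_mul_left
      C hCne hCclosed.isCompact hCmul
  set ν := ω₀.map (HJsubst a₀) with hν
  have hν_eq : ∀ a : A, ω₀.map (HJsubst a) = ν := fun a => hω₀C.2 a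
  have hνν : ν * ν = ν := by rw [hν, ← map_subst_mul, hω₀idem]
  have hνfix : ∀ a : A, ν.map (HJsubst a) = ν := by
    intro a
    rw [hν, Ultrafilter.map_map]
    have : HJsubst a ∘ HJsubst a₀ = HJsubst a₀ :=
      funext fun w => subst_subst a a₀ w
    rw [this]
  have hW0ν : HJW0 A ∈ ν :=
    Ultrafilter.mem_map.2 (Filter.mem_of_superset hω₀C.1 fun w hw => subst_mem_W0 hw)
  -- the compact subsemigroup `G`
  set G : Set (Ultrafilter (List (Option A))) :=
    {u | HJW1 A ∈ u ∧ (∀ a : A, u.map (HJsubst a) = ν) ∧ u * ν = u} with hG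
  have hGclosed : IsClosed G := by
    have : G = {u : Ultrafilter (List (Option A)) | HJW1 A ∈ u} ∩
        ((⋂ a : A, {u | u.map (HJsubst a) = ν}) ∩ {u | u * ν = u}) := by
      ext u; simp [hG, Set.mem_iInter]
    rw [this]
    exact (ultrafilter_isClosed_basic _).inter
      ((isClosed_iInter fun a => isClosed_eq (continuous_umap _) continuous_const).inter
        (isClosed_eq (Ultrafilter.continuous_mul_left ν) continuous_id))
  have hGmul : ∀ u ∈ G, ∀ v ∈ G, u * v ∈ G := by
    rintro u ⟨hu1, hu2, hu3⟩ v ⟨hv1, hv2, hv3⟩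
    refine ⟨W1_mem_mul_right hv1, fun a => by rw [map_subst_mul, hu2 a, hv2 a, hνν], ?_⟩
    rw [mul_assoc, hv3]
  have hGne : G.Nonempty := by
    refine ⟨ν * ω₀ * ν, ?_, fun a => ?_, ?_⟩
    · exact W1_mem_mul_left (W1_mem_mul_right hω₀C.1)
    · rw [map_subst_mul, map_subst_mul, hνfix a, hν_eq a, hνν, hνν]
    · rw [mul_assoc (ν * ω₀) ν ν, hνν]
  obtain ⟨ω', hω'G, hω'idem⟩ :=
    exists_idempotent_in_compact_subsemigroup Ultrafilter.continuous_mul_left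
      G hGne hGclosed.isCompact hGmul
  obtain ⟨hω'W1, hω'map, hω'ν⟩ := hω'G
  set ω := ν * ω' with hω
  have hωω : ω * ω = ω := by
    rw [hω, mul_assoc, ← mul_assoc ω' ν ω', hω'ν, hω'idem]
  have hνω : ν * ω = ω := by rw [hω, ← mul_assoc, hνν]
  have hων : ω * ν = ω := by rw [hω, mul_assoc, hω'ν]
  have hωW1 : HJW1 A ∈ ω := W1_mem_mul_right hω'W1
  have hωmap : ∀ a : A, ω.map (HJsubst a) = ν := fun a => by
    rw [hω, map_subst_mul, hνfix a, hω'map a, hνν]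
  exact ⟨ν, ω, hW0ν, hωW1, by rw [uProd_eq, hνν], by rw [uProd_eq, hωω],
    by rw [uProd_eq, hων], by rw [uProd_eq, hνω], hωmap⟩

end HJaux

/-- There are ultrafilters `ν` and `ω` on `T = W₀ ∪ W₁` (words under concatenation),
concentrated on `W₀` and `W₁` respectively, such that `ν·ν = ν`, `ω·ω = ω`,
`ω·ν = ν·ω = ω`, and the pushforward of `ω` along every substitution map `u ↦ u[a]`
is `ν`. -/
theorem hales_jewett_idempotents (A : Type*) [Fintype A] [Nonempty A] :
    ∃ ν ω : Ultrafilter (List (Option A)),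
      HJW0 A ∈ ν ∧ HJW1 A ∈ ω ∧
      uProd (· ++ ·) ν ν = ν ∧
      uProd (· ++ ·) ω ω = ω ∧
      uProd (· ++ ·) ω ν = ω ∧
      uProd (· ++ ·) ν ω = ω ∧
      ∀ a : A, Ultrafilter.map (HJsubst a) ω = ν := by
  exact HJaux.main A
end

section
/- Let A be a nonempty finite alphabet and W = ⋃_{k∈ℕ} W_k the Graham–Rothschild semigroup over A. Then there exists a sequence (ν_i)_{i∈ℕ} of ultrafilters on W with W_i ∈ ν_i for every i, such that for every strong infinite parameter word w̃ and every i ∈ ℕ there exists j ≤ i with Ultrafilter.map (u ↦ u[w̃]) ν_i = ν_j. (That is, the sequence is coherent with respect to all substitution maps given by strong infinite parameter words.) -/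
/-- A word over the alphabet `A` extended by variable symbols: letters are either
elements of `A` (`Sum.inl a`) or variables (`Sum.inr i` encodes the variable `x_{i+1}`).
A word is a finite tuple of letters together with its length. -/
def Word (A : Type*) : Type _ := Σ n : ℕ, Fin n → A ⊕ ℕ

/-- `w` is a `k`-parameter word: every variable occurring in it is among
`x_1, …, x_k` (encoded as `Sum.inr 0, …, Sum.inr (k-1)`), each of them occurs, and
their first occurrences appear in increasing order. -/
def IsPWord (A : Type*) (k : ℕ) {n : ℕ} (w : Fin n → A ⊕ ℕ) : Prop :=
  (∀ p i, w p = Sum.inr i → i < k) ∧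
  (∀ i, i < k → ∃ p, w p = Sum.inr i) ∧
  (∀ q j, w q = Sum.inr (j + 1) → ∃ p, p < q ∧ w p = Sum.inr j)

/-- `W_k` as a subset of `Word A`: the set of `k`-parameter words of arbitrary
finite length. -/
def WLayer (A : Type*) (k : ℕ) : Set (Word A) := { w | IsPWord A k w.2 }

/-- Concatenation of words. -/
def wcat {A : Type*} (u v : Word A) : Word A := ⟨u.1 + v.1, Fin.append u.2 v.2⟩

/-- An infinite parameter word: a function `ℕ → A ⊕ ℕ` (position `p` holds the
`(p+1)`-st letter; `Sum.inr i` encodes `x_{i+1}`) in which every variable occurs and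
the first occurrences of `x_1, x_2, …` appear in increasing order. -/
def IsInfPWord (A : Type*) (w : ℕ → A ⊕ ℕ) : Prop :=
  (∀ i : ℕ, ∃ p, w p = Sum.inr i) ∧
  (∀ q j, w q = Sum.inr (j + 1) → ∃ p, p < q ∧ w p = Sum.inr j)

/-- Substitution of an infinite parameter word `w` into a word `u`: every occurrence of
the variable `x_{i+1}` in `u` is replaced by the letter `w i`. -/
def wsubst {A : Type*} (u : Word A) (w : ℕ → A ⊕ ℕ) : Word A :=
  ⟨u.1, fun p => Sum.elim Sum.inl w (u.2 p)⟩


/-- A strong infinite parameter word: a function `ℕ → A ⊕ ℕ` in which every variable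
occurs, and such that whenever `x_{i+1}` occurs at position `p` and `x_{j+1}` occurs at
position `q` with `p ≤ q`, then `i ≤ j` (all occurrences appear in order). -/
def IsStrongInfPWord (A : Type*) (w : ℕ → A ⊕ ℕ) : Prop :=
  (∀ i : ℕ, ∃ p, w p = Sum.inr i) ∧
  (∀ p q i j, w p = Sum.inr i → w q = Sum.inr j → p ≤ q → i ≤ j)

namespace GRAux

variable {A : Type*}

theorem word_ext {u v : Word A} (h : u.1 = v.1)
    (h2 : ∀ p : Fin u.1, u.2 p = v.2 (Fin.cast h p)) : u = v := by
  obtain ⟨n, f⟩ := u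
  obtain ⟨m, g⟩ := v
  dsimp at h
  subst h
  exact congrArg (Sigma.mk n) (funext fun p => h2 p)

theorem wcat_assoc (u v t : Word A) : wcat (wcat u v) t = wcat u (wcat v t) := by
  refine word_ext (Nat.add_assoc _ _ _) fun p => ?_
  have := congrFun (Fin.append_assoc u.2 v.2 t.2) p
  exact this

instance : Semigroup (Word A) where
  mul := wcat
  mul_assoc := wcat_assoc

theorem mul_def (u v : Word A) : u * v = wcat u v := rfl

/-- Case analysis for positions in an appended word. -/
theorem append_cases {α : Type*} {m n : ℕ} (f : Fin m → α) (g : Fin n → α) (p : Fin (m + n)) :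
    (∃ i : Fin m, (i : ℕ) = (p : ℕ) ∧ Fin.append f g p = f i) ∨
      (∃ i : Fin n, m + (i : ℕ) = (p : ℕ) ∧ Fin.append f g p = g i) := by
  refine Fin.addCases (motive := fun p => (∃ i : Fin m, (i : ℕ) = (p : ℕ) ∧ Fin.append f g p = f i) ∨
      (∃ i : Fin n, m + (i : ℕ) = (p : ℕ) ∧ Fin.append f g p = g i))
    (fun i => Or.inl ⟨i, rfl, Fin.append_left f g i⟩)
    (fun i => Or.inr ⟨i, rfl, Fin.append_right f g i⟩) p


theorem comp_append {α β : Type*} {m n : ℕ} (h : α → β) (f : Fin m → α) (g : Fin n → α) :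
    (fun p => h (Fin.append f g p)) = Fin.append (h ∘ f) (h ∘ g) := by
  funext p
  refine Fin.addCases (motive := fun p => h (Fin.append f g p) = Fin.append (h ∘ f) (h ∘ g) p)
    (fun i => ?_) (fun i => ?_) p
  · show h (Fin.append f g (Fin.castAdd n i)) = Fin.append (h ∘ f) (h ∘ g) (Fin.castAdd n i)
    rw [Fin.append_left, Fin.append_left]; rfl
  · show h (Fin.append f g (Fin.natAdd m i)) = Fin.append (h ∘ f) (h ∘ g) (Fin.natAdd m i)
    rw [Fin.append_right, Fin.append_right]; rfl

theorem wcat_layer_max {u v : Word A} {k l : ℕ} (hu : u ∈ WLayer A k) (hv : v ∈ WLayer A l) :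
    wcat u v ∈ WLayer A (max k l) := by
  obtain ⟨hu1, hu2, hu3⟩ := hu
  obtain ⟨hv1, hv2, hv3⟩ := hv
  refine ⟨?_, ?_, ?_⟩
  · intro p i hp
    rcases append_cases u.2 v.2 p with ⟨i0, _, he⟩ | ⟨i0, _, he⟩
    · exact lt_of_lt_of_le (hu1 i0 i (by rw [← he]; exact hp)) (le_max_left _ _)
    · exact lt_of_lt_of_le (hv1 i0 i (by rw [← he]; exact hp)) (le_max_right _ _)
  · intro i hi
    by_cases hik : i < k
    · obtain ⟨p0, hp0⟩ := hu2 i hik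
      refine ⟨Fin.castAdd _ p0, ?_⟩
      show Fin.append u.2 v.2 _ = _
      rw [Fin.append_left]; exact hp0
    · obtain ⟨p0, hp0⟩ := hv2 i ((lt_max_iff.mp hi).resolve_left hik)
      refine ⟨Fin.natAdd _ p0, ?_⟩
      show Fin.append u.2 v.2 _ = _
      rw [Fin.append_right]; exact hp0
  · intro q j hq
    rcases append_cases u.2 v.2 q with ⟨i0, hval, he⟩ | ⟨i0, hval, he⟩
    · obtain ⟨p0, hlt, hp0⟩ := hu3 i0 j (by rw [← he]; exact hq)
      refine ⟨Fin.castAdd _ p0, ?_, ?_⟩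
      · refine Fin.lt_def.mpr ?_
        simp only [Fin.coe_castAdd, ← hval]
        exact hlt
      · show Fin.append u.2 v.2 _ = _
        rw [Fin.append_left]; exact hp0
    · obtain ⟨p0, hlt, hp0⟩ := hv3 i0 j (by rw [← he]; exact hq)
      refine ⟨Fin.natAdd _ p0, ?_, ?_⟩
      · refine Fin.lt_def.mpr ?_
        simp only [Fin.coe_natAdd, ← hval]
        exact Nat.add_lt_add_left hlt _
      · show Fin.append u.2 v.2 _ = _
        rw [Fin.append_right]; exact hp0

/-- The set of words all of whose variables are `x_{m+1}`, with at least one occurrence. -/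
def Q (A : Type*) (m : ℕ) : Set (Word A) :=
  { v | (∀ p i, v.2 p = Sum.inr i → i = m) ∧ ∃ p, v.2 p = Sum.inr m }

theorem wcat_step {u v : Word A} {m : ℕ} (hu : u ∈ WLayer A m) (hv : v ∈ Q A m) :
    wcat u v ∈ WLayer A (m + 1) := by
  obtain ⟨hu1, hu2, hu3⟩ := hu
  obtain ⟨hv1, hv2⟩ := hv
  refine ⟨?_, ?_, ?_⟩
  · intro p i hp
    rcases append_cases u.2 v.2 p with ⟨i0, _, he⟩ | ⟨i0, _, he⟩
    · exact lt_trans (hu1 i0 i (by rw [← he]; exact hp)) (Nat.lt_succ_self m)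
    · rw [hv1 i0 i (by rw [← he]; exact hp)]; exact Nat.lt_succ_self m
  · intro i hi
    rcases Nat.lt_succ_iff_lt_or_eq.mp hi with h | h
    · obtain ⟨p0, hp0⟩ := hu2 i h
      refine ⟨Fin.castAdd _ p0, ?_⟩
      show Fin.append u.2 v.2 _ = _
      rw [Fin.append_left]; exact hp0
    · obtain ⟨p0, hp0⟩ := hv2
      refine ⟨Fin.natAdd _ p0, ?_⟩
      show Fin.append u.2 v.2 _ = _
      rw [Fin.append_right, h]; exact hp0
  · intro q j hq
    rcases append_cases u.2 v.2 q with ⟨i0, hval, he⟩ | ⟨i0, hval, he⟩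
    · obtain ⟨p0, hlt, hp0⟩ := hu3 i0 j (by rw [← he]; exact hq)
      refine ⟨Fin.castAdd _ p0, ?_, ?_⟩
      · refine Fin.lt_def.mpr ?_
        simp only [Fin.coe_castAdd, ← hval]
        exact hlt
      · show Fin.append u.2 v.2 _ = _
        rw [Fin.append_left]; exact hp0
    · have hj : j + 1 = m := hv1 i0 (j+1) (by rw [← he]; exact hq)
      obtain ⟨p0, hp0⟩ := hu2 j (by omega)
      refine ⟨Fin.castAdd _ p0, ?_, ?_⟩
      · refine Fin.lt_def.mpr ?_
        simp only [Fin.coe_castAdd, ← hval]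
        exact lt_of_lt_of_le p0.2 (Nat.le_add_right _ _)
      · show Fin.append u.2 v.2 _ = _
        rw [Fin.append_left]; exact hp0

/-! ### Substitution -/

theorem wsubst_mul (w : ℕ → A ⊕ ℕ) (u v : Word A) :
    wsubst (wcat u v) w = wcat (wsubst u w) (wsubst v w) := by
  refine word_ext rfl fun p => ?_
  show (Sum.elim Sum.inl w) (Fin.append u.2 v.2 p) =
    Fin.append ((Sum.elim Sum.inl w) ∘ u.2) ((Sum.elim Sum.inl w) ∘ v.2) p
  exact congrFun (comp_append _ _ _) p

theorem wsubst_comp (u : Word A) (w w' : ℕ → A ⊕ ℕ) :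
    wsubst (wsubst u w) w' = wsubst u (fun i => Sum.elim Sum.inl w' (w i)) := by
  refine word_ext rfl fun p => ?_
  show Sum.elim Sum.inl w' (Sum.elim Sum.inl w (u.2 p)) =
    Sum.elim Sum.inl (fun i => Sum.elim Sum.inl w' (w i)) (u.2 p)
  cases u.2 p <;> rfl

theorem wsubst_layer0 {u : Word A} (hu : u ∈ WLayer A 0) (w : ℕ → A ⊕ ℕ) :
    wsubst u w = u := by
  refine word_ext rfl fun p => ?_
  show Sum.elim Sum.inl w (u.2 p) = u.2 p
  cases h : u.2 p with
  | inl a => rfl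
  | inr i => exact absurd (hu.1 p i h) (Nat.not_lt_zero i)

theorem wsubst_const_letter {u : Word A} (hu : u ∈ WLayer A 1) (a : A) :
    wsubst u (fun _ => Sum.inl a) ∈ WLayer A 0 := by
  have hnovar : ∀ p i, (wsubst u (fun _ => Sum.inl a)).2 p = Sum.inr i → False := by
    intro p i hp
    change Sum.elim Sum.inl (fun _ => Sum.inl a) (u.2 p) = Sum.inr i at hp
    cases h : u.2 p <;> rw [h] at hp <;> simp at hp
  exact ⟨fun p i hp => absurd hp (fun h => hnovar p i h),
    fun i hi => absurd hi (Nat.not_lt_zero i),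
    fun q j hq => absurd hq (fun h => hnovar q (j+1) h)⟩

theorem wsubst_const_var {u : Word A} (hu : u ∈ WLayer A 1) (m : ℕ) :
    wsubst u (fun _ => Sum.inr m) ∈ Q A m := by
  constructor
  · intro p i hp
    change Sum.elim Sum.inl (fun _ => Sum.inr m) (u.2 p) = Sum.inr i at hp
    cases h : u.2 p <;> rw [h] at hp <;> simp at hp
    exact hp.symm
  · obtain ⟨p, hp⟩ := hu.2.1 0 Nat.one_pos
    exact ⟨p, by change Sum.elim Sum.inl (fun _ => Sum.inr m) (u.2 p) = Sum.inr m; rw [hp]; rfl⟩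


/-! ### Ultrafilter semigroup -/

section Ultra

attribute [local instance] Ultrafilter.mul Ultrafilter.semigroup

theorem mem_umul {U V : Ultrafilter (Word A)} {E : Set (Word A)}
    (h : ∀ᶠ a in U, ∀ᶠ b in V, a * b ∈ E) : E ∈ U * V :=
  (Ultrafilter.eventually_mul U V (· ∈ E)).mpr h

theorem eventually_of_umem {U V : Ultrafilter (Word A)} {E : Set (Word A)}
    (h : E ∈ U * V) : ∀ᶠ a in U, ∀ᶠ b in V, a * b ∈ E :=
  (Ultrafilter.eventually_mul U V (· ∈ E)).mp h

theorem ueventually_map {α β : Type*} (f : α → β) (U : Ultrafilter α) (P : β → Prop) :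
    (∀ᶠ x in ↑(Ultrafilter.map f U), P x) ↔ ∀ᶠ y in ↑U, P (f y) := by
  rw [Ultrafilter.coe_map]; exact Filter.eventually_map

theorem umap_mul {f : Word A → Word A} (hf : ∀ u v, f (u * v) = f u * f v)
    (U V : Ultrafilter (Word A)) :
    Ultrafilter.map f (U * V) = Ultrafilter.map f U * Ultrafilter.map f V := by
  refine Ultrafilter.coe_injective (Filter.ext fun s => ?_)
  rw [Ultrafilter.mem_coe, Ultrafilter.mem_coe]
  constructor
  · intro hs
    rw [Ultrafilter.mem_map] at hs
    have hs' : ∀ᶠ a in U, ∀ᶠ b in V, f (a * b) ∈ s :=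
      (Ultrafilter.eventually_mul U V (fun m => f m ∈ s)).mp hs
    apply mem_umul
    rw [ueventually_map]
    refine hs'.mono fun a ha => ?_
    rw [ueventually_map]
    refine ha.mono fun b hb => ?_
    rwa [← hf]
  · intro hs
    have hs' := (Ultrafilter.eventually_mul (Ultrafilter.map f U) (Ultrafilter.map f V)
      (· ∈ s)).mp hs
    rw [ueventually_map] at hs'
    rw [Ultrafilter.mem_map]
    refine (Ultrafilter.eventually_mul U V (fun m => f m ∈ s)).mpr ?_
    refine hs'.mono fun a ha => ?_
    rw [ueventually_map] at ha
    refine ha.mono fun b hb => ?_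
    rwa [hf]

theorem umap_congr {α β : Type*} {f g : α → β} {U : Ultrafilter α}
    (h : ∀ᶠ x in U, f x = g x) : Ultrafilter.map f U = Ultrafilter.map g U :=
  Ultrafilter.coe_injective (by
    rw [Ultrafilter.coe_map, Ultrafilter.coe_map]
    exact Filter.map_congr h)

theorem umap_id {α : Type*} {f : α → α} {U : Ultrafilter α}
    (h : ∀ᶠ x in U, f x = x) : Ultrafilter.map f U = U := by
  rw [umap_congr (g := id) h, Ultrafilter.map_id]

theorem gr_main (A : Type*) :
    ∃ ν : ℕ → Ultrafilter (Word A),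
      (∀ i, WLayer A i ∈ ν i) ∧
      ∀ w : ℕ → A ⊕ ℕ, IsStrongInfPWord A w →
        ∀ i : ℕ, ∃ j ≤ i,
          Ultrafilter.map (fun u : Word A => wsubst u w) (ν i) = ν j := by
  classical
  set D : Set (Ultrafilter (Word A)) := {μ | WLayer A 0 ∈ μ} with hD
  have hDclosed : IsClosed D := ultrafilter_isClosed_basic _
  have hemptyw : (⟨0, Fin.elim0⟩ : Word A) ∈ WLayer A 0 :=
    ⟨fun p => p.elim0, fun i hi => absurd hi (Nat.not_lt_zero i), fun q => q.elim0⟩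
  have hDne : D.Nonempty := ⟨pure ⟨0, Fin.elim0⟩, Ultrafilter.mem_pure.mpr hemptyw⟩
  have hDmul : ∀ x ∈ D, ∀ y ∈ D, x * y ∈ D := by
    intro x hx y hy
    refine mem_umul ?_
    filter_upwards [Ultrafilter.mem_coe.mpr hx] with a ha
    filter_upwards [Ultrafilter.mem_coe.mpr hy] with b hb
    simpa [mul_def] using wcat_layer_max ha hb
  set 𝒮 : Set (Set (Ultrafilter (Word A))) :=
    {L | L.Nonempty ∧ IsClosed L ∧ L ⊆ D ∧ ∀ x ∈ D, ∀ y ∈ L, x * y ∈ L} with h𝒮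
  have hD𝒮 : D ∈ 𝒮 := ⟨hDne, hDclosed, le_refl D, hDmul⟩
  obtain ⟨L, hLmin⟩ : ∃ L, Minimal (· ∈ 𝒮) L := by
    apply zorn_superset
    intro c hc hchain
    rcases c.eq_empty_or_nonempty with rfl | hcne
    · exact ⟨D, hD𝒮, by simp⟩
    have : Nonempty c := hcne.coe_sort
    refine ⟨⋂₀ c, ⟨?_, isClosed_sInter fun t ht => (hc ht).2.1, ?_, ?_⟩,
      fun s hs => Set.sInter_subset_of_mem hs⟩
    · rw [Set.sInter_eq_iInter]
      exact IsCompact.nonempty_iInter_of_directed_nonempty_isCompact_isClosed _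
        (DirectedOn.directed_val (IsChain.directedOn hchain.symm))
        (fun t => (hc t.prop).1) (fun t => (hc t.prop).2.1.isCompact)
        (fun t => (hc t.prop).2.1)
    · obtain ⟨t, ht⟩ := hcne
      exact (Set.sInter_subset_of_mem ht).trans (hc ht).2.2.1
    · intro x hx y hy
      rw [Set.mem_sInter] at hy ⊢
      exact fun t ht => (hc ht).2.2.2 x hx y (hy t ht)
  obtain ⟨hLne, hLclosed, hLD, hLideal⟩ := hLmin.prop
  obtain ⟨p, hpL, hpp⟩ := exists_idempotent_in_compact_subsemigroup
    Ultrafilter.continuous_mul_left L hLne hLclosed.isCompact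
    (fun x hx y hy => hLideal x (hLD hx) y hy)
  have hpD : p ∈ D := hLD hpL
  have hp0 : WLayer A 0 ∈ p := hpD
  -- absorption property of the minimal left ideal
  have key : ∀ e : Ultrafilter (Word A), e ∈ D → e * e = e → e * p = e → p * e = p := by
    intro e heD heid hep
    have heL : e ∈ L := hep ▸ hLideal e heD p hpL
    have hIm : ((· * e) '' D) ∈ 𝒮 := by
      refine ⟨⟨p * e, ⟨p, hpD, rfl⟩⟩,
        (hDclosed.isCompact.image (Ultrafilter.continuous_mul_left e)).isClosed, ?_, ?_⟩
      · rintro _ ⟨x, hx, rfl⟩; exact hDmul x hx e heD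
      · rintro x hx _ ⟨y, hy, rfl⟩
        refine ⟨x * y, hDmul x hx y hy, ?_⟩
        exact show (x * y) * e = x * (y * e) from mul_assoc x y e
    have hsub : (· * e) '' D ⊆ L := by
      rintro _ ⟨x, hx, rfl⟩; exact hLideal x hx e heL
    have hEq := hLmin.eq_of_subset hIm hsub
    have hpmem : p ∈ (· * e) '' D := hEq.symm ▸ hpL
    obtain ⟨y, hyD, hye0⟩ := hpmem
    have hye : y * e = p := hye0
    calc p * e = (y * e) * e := by rw [hye]
    _ = y * (e * e) := mul_assoc _ _ _
    _ = y * e := by rw [heid]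
    _ = p := hye
  -- the one-variable layer and the auxiliary idempotent
  have z1mem : (⟨1, fun _ => Sum.inr 0⟩ : Word A) ∈ WLayer A 1 := by
    refine ⟨fun p i h => ?_, fun i hi => ⟨0, ?_⟩, fun q j h => ?_⟩
    · simp only [Sum.inr.injEq] at h; omega
    · rw [Nat.lt_one_iff.mp hi]
    · simp only [Sum.inr.injEq] at h; omega
  set F : Set (Ultrafilter (Word A)) := {μ | WLayer A 1 ∈ μ ∧ μ * p = μ} with hF
  have hFne : F.Nonempty := by
    refine ⟨pure ⟨1, fun _ => Sum.inr 0⟩ * p, ?_, ?_⟩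
    · refine mem_umul ?_
      refine Filter.eventually_pure.mpr ?_
      filter_upwards [Ultrafilter.mem_coe.mpr hp0] with b hb
      have h := wcat_layer_max z1mem hb; rw [max_eq_left (Nat.zero_le 1)] at h; exact h
    · rw [mul_assoc, hpp]
  have hFclosed : IsClosed F := by
    refine (ultrafilter_isClosed_basic _).inter ?_
    exact isClosed_eq (Ultrafilter.continuous_mul_left p) continuous_id
  have hFmul : ∀ x ∈ F, ∀ y ∈ F, x * y ∈ F := by
    rintro x ⟨hx1, hx2⟩ y ⟨hy1, hy2⟩
    refine ⟨?_, by rw [mul_assoc, hy2]⟩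
    refine mem_umul ?_
    filter_upwards [Ultrafilter.mem_coe.mpr hx1] with a ha
    filter_upwards [Ultrafilter.mem_coe.mpr hy1] with b hb
    simpa [mul_def] using wcat_layer_max ha hb
  obtain ⟨qt, hqtF, hqtid⟩ := exists_idempotent_in_compact_subsemigroup
    Ultrafilter.continuous_mul_left F hFne hFclosed.isCompact hFmul
  obtain ⟨hqt1, hqtp⟩ := hqtF
  set q : Ultrafilter (Word A) := p * qt with hqdef
  have hq1 : WLayer A 1 ∈ q := by
    refine mem_umul ?_
    filter_upwards [Ultrafilter.mem_coe.mpr hp0] with a ha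
    filter_upwards [Ultrafilter.mem_coe.mpr hqt1] with b hb
    simpa [mul_def] using wcat_layer_max ha hb
  have hpq : p * q = q := by rw [hqdef, ← mul_assoc, hpp]
  have hqp : q * p = q := by rw [hqdef, mul_assoc, hqtp]
  have hqq : q * q = q := by
    rw [hqdef]
    calc (p * qt) * (p * qt) = p * (qt * (p * qt)) := by rw [mul_assoc]
    _ = p * ((qt * p) * qt) := by rw [mul_assoc qt p qt]
    _ = p * (qt * qt) := by rw [hqtp]
    _ = p * qt := by rw [hqtid]
  -- substitution maps
  have sub_hom : ∀ (w : ℕ → A ⊕ ℕ) (U V : Ultrafilter (Word A)),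
      Ultrafilter.map (fun u => wsubst u w) (U * V) =
        Ultrafilter.map (fun u => wsubst u w) U * Ultrafilter.map (fun u => wsubst u w) V :=
    fun w U V => umap_mul (fun u v => wsubst_mul w u v) U V
  have sub0 : ∀ (w : ℕ → A ⊕ ℕ) (U : Ultrafilter (Word A)), WLayer A 0 ∈ U →
      Ultrafilter.map (fun u => wsubst u w) U = U := by
    intro w U hU
    refine umap_id ?_
    filter_upwards [Ultrafilter.mem_coe.mpr hU] with u hu
    exact wsubst_layer0 hu w
  -- all constant-letter substitutions of q give p
  have hsigma : ∀ a : A, Ultrafilter.map (fun u => wsubst u (fun _ => Sum.inl a)) q = p := by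
    intro a
    set e : Ultrafilter (Word A) :=
      Ultrafilter.map (fun u => wsubst u (fun _ => Sum.inl a)) qt with he
    have heD : e ∈ D := by
      show WLayer A 0 ∈ e
      rw [he, Ultrafilter.mem_map]
      exact Filter.mem_of_superset hqt1 (fun u hu => wsubst_const_letter hu a)
    have heid : e * e = e := by rw [he, ← sub_hom, hqtid]
    have hep : e * p = e := by
      rw [he, ← sub0 (fun _ => Sum.inl a) p hp0, ← sub_hom, hqtp]
    have hpe := key e heD heid hep
    rw [hqdef, sub_hom, sub0 _ p hp0]
    rw [he] at hpe
    exact hpe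
  -- the renamed one-variable idempotents
  set ρ : ℕ → Ultrafilter (Word A) :=
    fun m => Ultrafilter.map (fun u => wsubst u (fun _ => Sum.inr m)) q with hρ
  have hρ_comp : ∀ (w : ℕ → A ⊕ ℕ) (m : ℕ),
      Ultrafilter.map (fun u => wsubst u w) (ρ m) =
        Ultrafilter.map (fun u => wsubst u (fun _ => w m)) q := by
    intro w m
    rw [hρ, Ultrafilter.map_map]
    refine congrArg (fun f => Ultrafilter.map f q) (funext fun u => ?_)
    exact wsubst_comp u (fun _ => Sum.inr m) w
  have hρQ : ∀ m, Q A m ∈ ρ m := by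
    intro m
    rw [hρ, Ultrafilter.mem_map]
    exact Filter.mem_of_superset hq1 (fun u hu => wsubst_const_var hu m)
  have hρp : ∀ m, ρ m * p = ρ m := by
    intro m
    have := congrArg (Ultrafilter.map (fun u => wsubst u (fun _ => Sum.inr m))) hqp
    rwa [sub_hom, sub0 _ p hp0] at this
  have hρρ : ∀ m, ρ m * ρ m = ρ m := by
    intro m
    have := congrArg (Ultrafilter.map (fun u => wsubst u (fun _ => Sum.inr m))) hqq
    rwa [sub_hom] at this
  -- the coherent sequence
  set ν : ℕ → Ultrafilter (Word A) :=
    fun k => Nat.rec p (fun m acc => acc * ρ m) k with hν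
  have hνs : ∀ k, ν (k+1) = ν k * ρ k := fun k => rfl
  have hνlayer : ∀ k, WLayer A k ∈ ν k := by
    intro k
    induction k with
    | zero => exact hp0
    | succ m ih =>
      rw [hνs]
      refine mem_umul ?_
      filter_upwards [Ultrafilter.mem_coe.mpr ih] with a ha
      filter_upwards [Ultrafilter.mem_coe.mpr (hρQ m)] with b hb
      exact wcat_step ha hb
  have hνp : ∀ k, ν k * p = ν k := by
    intro k
    induction k with
    | zero => exact hpp
    | succ m ih => rw [hνs, mul_assoc, hρp]
  have hνrep : ∀ m, ν (m+1) * ρ m = ν (m+1) := by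
    intro m
    rw [hνs, mul_assoc, hρρ]
  refine ⟨ν, hνlayer, ?_⟩
  intro w hw i
  suffices h : ∃ j, j ≤ i ∧ Ultrafilter.map (fun u => wsubst u w) (ν i) = ν j ∧
      (∀ t s, t < i → w t = Sum.inr s → s < j) ∧
      (∀ s, s < j → ∃ t, t < i ∧ w t = Sum.inr s) by
    obtain ⟨j, h1, h2, _⟩ := h
    exact ⟨j, h1, h2⟩
  induction i with
  | zero =>
    refine ⟨0, le_refl 0, sub0 w p hp0, fun t s ht _ => absurd ht (Nat.not_lt_zero t),
      fun s hs => absurd hs (Nat.not_lt_zero s)⟩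
  | succ i ih =>
    obtain ⟨j, hji, hmap, hub, hcov⟩ := ih
    have hstep : Ultrafilter.map (fun u => wsubst u w) (ν (i+1)) =
        ν j * Ultrafilter.map (fun u => wsubst u (fun _ => w i)) q := by
      rw [hνs, sub_hom, hmap, hρ_comp]
    cases hwi : w i with
    | inl a =>
      refine ⟨j, le_trans hji (Nat.le_succ i), ?_, ?_, ?_⟩
      · rw [hstep, show (fun _ : ℕ => w i) = (fun _ : ℕ => (Sum.inl a : A ⊕ ℕ)) from
          funext fun _ => hwi, hsigma a, hνp j]
      · intro t s ht hts
        rcases Nat.lt_succ_iff_lt_or_eq.mp ht with h | h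
        · exact hub t s h hts
        · subst h; rw [hwi] at hts; exact absurd hts (by simp)
      · intro s hs
        obtain ⟨t, ht, h⟩ := hcov s hs
        exact ⟨t, Nat.lt_succ_of_lt ht, h⟩
    | inr s =>
      have hsle : s ≤ j := by
        by_contra hgt
        push_neg at hgt
        obtain ⟨t0, ht0⟩ := hw.1 j
        rcases lt_trichotomy t0 i with h | h | h
        · exact absurd (hub t0 j h ht0) (lt_irrefl j)
        · subst h; rw [hwi] at ht0
          have := Sum.inr.inj ht0; omega
        · have := hw.2 i t0 s j hwi ht0 (le_of_lt h); omega
      by_cases hsj : s = j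
      · subst hsj
        refine ⟨s + 1, by omega, ?_, ?_, ?_⟩
        · rw [hstep, show (fun _ : ℕ => w i) = (fun _ : ℕ => (Sum.inr s : A ⊕ ℕ)) from
            funext fun _ => hwi]
        · intro t s' ht hts
          rcases Nat.lt_succ_iff_lt_or_eq.mp ht with h | h
          · exact Nat.lt_succ_of_lt (hub t s' h hts)
          · subst h; rw [hwi] at hts
            have := Sum.inr.inj hts; omega
        · intro s' hs'
          rcases Nat.lt_succ_iff_lt_or_eq.mp hs' with h | h
          · obtain ⟨t, ht, hh⟩ := hcov s' h
            exact ⟨t, Nat.lt_succ_of_lt ht, hh⟩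
          · subst h; exact ⟨i, Nat.lt_succ_self i, hwi⟩
      · have hslt : s < j := lt_of_le_of_ne hsle hsj
        obtain ⟨t1, ht1i, ht1⟩ := hcov (j-1) (by omega)
        have hj1 : j - 1 ≤ s := hw.2 t1 i (j-1) s ht1 hwi (le_of_lt ht1i)
        have hjs : j = s + 1 := by omega
        refine ⟨j, Nat.le_succ_of_le hji, ?_, ?_, ?_⟩
        · rw [hstep, show (fun _ : ℕ => w i) = (fun _ : ℕ => (Sum.inr s : A ⊕ ℕ)) from
            funext fun _ => hwi, hjs]
          exact hνrep s
        · intro t s' ht hts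
          rcases Nat.lt_succ_iff_lt_or_eq.mp ht with h | h
          · exact hub t s' h hts
          · subst h; rw [hwi] at hts
            have := Sum.inr.inj hts; omega
        · intro s' hs'
          obtain ⟨t, ht, hh⟩ := hcov s' hs'
          exact ⟨t, Nat.lt_succ_of_lt ht, hh⟩

end Ultra

end GRAux

/-- There is a sequence `(ν_i)` of ultrafilters on the Graham–Rothschild semigroup `W`
over a nonempty finite alphabet, with `W_i ∈ ν_i`, which is coherent with respect to all
substitution maps given by strong infinite parameter words: for every strong infinite
parameter word `w̃` and every `i` there is `j ≤ i` with
`Ultrafilter.map (u ↦ u[w̃]) ν_i = ν_j`. -/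
theorem gr_strong_coherent_sequence (A : Type*) [Fintype A] [Nonempty A] :
    ∃ ν : ℕ → Ultrafilter (Word A),
      (∀ i, WLayer A i ∈ ν i) ∧
      ∀ w : ℕ → A ⊕ ℕ, IsStrongInfPWord A w →
        ∀ i : ℕ, ∃ j ≤ i,
          Ultrafilter.map (fun u : Word A => wsubst u w) (ν i) = ν j :=
  GRAux.gr_main A
end
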